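/- arXiv:2109.13083 — 7 statements merged into one kernel-verified Lean document; each statement's English description precedes it below -/
import Mathlib

section
/- For all real t ≥ 0, ln(1+t) ≥ t/(1+t) + t²/(2(1+t)²) · (1 + (2/3)·ln(1+t)). -/
noncomputable def fAux (x : ℝ) : ℝ :=
  Real.log (1 + x) - x / (1 + x) - x ^ 2 / (2 * (1 + x) ^ 2)
    - x ^ 2 / (3 * (1 + x) ^ 2) * Real.log (1 + x)

lemma fAux_hasDerivAt (x : ℝ) (hx : 0 < 1 + x) :
    HasDerivAt fAux (2 * x / 3 * (x - Real.log (1 + x)) / (1 + x) ^ 3) x := by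
  have hne : (1 : ℝ) + x ≠ 0 := ne_of_gt hx
  have h1 : HasDerivAt (fun y : ℝ => 1 + y) 1 x := (hasDerivAt_id x).const_add 1
  have hlog : HasDerivAt (fun y : ℝ => Real.log (1 + y)) (1 / (1 + x)) x := by
    exact ((Real.hasDerivAt_log hne).comp x h1).congr_deriv (by simp)
  have ha : HasDerivAt (fun y : ℝ => y / (1 + y))
      ((1 * (1 + x) - x * 1) / (1 + x) ^ 2) x :=
    (hasDerivAt_id x).div h1 hne
  have hp : HasDerivAt (fun y : ℝ => y ^ 2) (2 * x) x := by
    simpa using hasDerivAt_pow 2 x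
  have hd2 : HasDerivAt (fun y : ℝ => 2 * (1 + y) ^ 2) (2 * (2 * (1 + x))) x := by
    have := ((h1.pow 2).const_mul 2)
    simpa [mul_comm, mul_assoc, mul_left_comm] using this
  have hd3 : HasDerivAt (fun y : ℝ => 3 * (1 + y) ^ 2) (3 * (2 * (1 + x))) x := by
    have := ((h1.pow 2).const_mul 3)
    simpa [mul_comm, mul_assoc, mul_left_comm] using this
  have hne2 : 2 * (1 + x) ^ 2 ≠ 0 := by positivity
  have hne3 : 3 * (1 + x) ^ 2 ≠ 0 := by positivity
  have hb : HasDerivAt (fun y : ℝ => y ^ 2 / (2 * (1 + y) ^ 2))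
      ((2 * x * (2 * (1 + x) ^ 2) - x ^ 2 * (2 * (2 * (1 + x)))) / (2 * (1 + x) ^ 2) ^ 2) x :=
    hp.div hd2 hne2
  have hc : HasDerivAt (fun y : ℝ => y ^ 2 / (3 * (1 + y) ^ 2))
      ((2 * x * (3 * (1 + x) ^ 2) - x ^ 2 * (3 * (2 * (1 + x)))) / (3 * (1 + x) ^ 2) ^ 2) x :=
    hp.div hd3 hne3
  have hcl : HasDerivAt (fun y : ℝ => y ^ 2 / (3 * (1 + y) ^ 2) * Real.log (1 + y))
      ((2 * x * (3 * (1 + x) ^ 2) - x ^ 2 * (3 * (2 * (1 + x)))) / (3 * (1 + x) ^ 2) ^ 2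
        * Real.log (1 + x) + x ^ 2 / (3 * (1 + x) ^ 2) * (1 / (1 + x))) x :=
    hc.mul hlog
  have h := ((hlog.sub ha).sub hb).sub hcl
  refine h.congr_deriv ?_
  field_simp
  ring

lemma fAux_nonneg (t : ℝ) (ht : 0 ≤ t) : 0 ≤ fAux t := by
  have hmono : MonotoneOn fAux (Set.Ici (0 : ℝ)) := by
    apply monotoneOn_of_deriv_nonneg (convex_Ici 0)
    · intro x hx
      have hx1 : (0:ℝ) < 1 + x := by
        have : (0:ℝ) ≤ x := hx
        linarith
      exact (fAux_hasDerivAt x hx1).continuousAt.continuousWithinAt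
    · intro x hx
      rw [interior_Ici] at hx
      have hx1 : (0:ℝ) < 1 + x := by have : (0:ℝ) < x := hx; linarith
      exact (fAux_hasDerivAt x hx1).differentiableAt.differentiableWithinAt
    · intro x hx
      rw [interior_Ici] at hx
      have hx0 : (0:ℝ) < x := hx
      have hx1 : (0:ℝ) < 1 + x := by linarith
      rw [(fAux_hasDerivAt x hx1).deriv]
      have hlog : Real.log (1 + x) ≤ x := by
        have := Real.log_le_sub_one_of_pos hx1
        linarith
      have h1 : 0 ≤ 2 * x / 3 * (x - Real.log (1 + x)) := by
        apply mul_nonneg (by positivity)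
        linarith
      positivity
  have h0 : fAux 0 = 0 := by simp [fAux]
  have := hmono (Set.self_mem_Ici) (Set.mem_Ici.mpr ht) ht
  linarith

theorem log_one_add_ge (t : ℝ) (ht : 0 ≤ t) :
    Real.log (1 + t) ≥
      t / (1 + t) + t ^ 2 / (2 * (1 + t) ^ 2) * (1 + 2 / 3 * Real.log (1 + t)) := by
  have hne : (1 : ℝ) + t ≠ 0 := by positivity
  have hf := fAux_nonneg t ht
  have hsplit : t ^ 2 / (2 * (1 + t) ^ 2) * (1 + 2 / 3 * Real.log (1 + t))
      = t ^ 2 / (2 * (1 + t) ^ 2) + t ^ 2 / (3 * (1 + t) ^ 2) * Real.log (1 + t) := by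
    field_simp
  unfold fAux at hf
  linarith
end

section
/- For all reals t > 0, y > 0 and every real u with u ≤ y, one has e^{tu} ≤ 1 + tu + ((e^{ty} − 1 − ty)/y²)·u². -/
open Real Set

private lemma aux_g1_nonneg {x : ℝ} (hx : x < 1) : 0 ≤ (x - 1) * Real.exp x + 1 := by
  have h1 : 1 - x ≤ Real.exp (-x) := by
    have := Real.add_one_le_exp (-x); linarith
  have h2 : Real.exp (-x) * Real.exp x = 1 := by
    rw [← Real.exp_add]; simp
  nlinarith [Real.exp_pos x, mul_le_mul_of_nonneg_right h1 (Real.exp_pos x).le]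

private lemma aux_g1_nonneg' (x : ℝ) : 0 ≤ (x - 1) * Real.exp x + 1 := by
  rcases lt_or_ge x 1 with h | h
  · exact aux_g1_nonneg h
  · nlinarith [Real.exp_pos x]

private lemma aux_g_nonneg {x : ℝ} (hx : 0 ≤ x) : 0 ≤ (x - 2) * Real.exp x + x + 2 := by
  have hmono : MonotoneOn (fun x : ℝ => (x - 2) * Real.exp x + x + 2) (Ici 0) := by
    apply monotoneOn_of_hasDerivWithinAt_nonneg (f' := fun x => (x - 1) * Real.exp x + 1)
      (convex_Ici 0)
    · fun_prop
    · intro x _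
      have h1 : HasDerivAt (fun x : ℝ => (x - 2) * Real.exp x + x + 2)
          ((x - 1) * Real.exp x + 1) x := by
        have h := (((hasDerivAt_id x).sub_const 2).mul (Real.hasDerivAt_exp x)).add
          (hasDerivAt_id x)
        have h' := h.add_const 2
        exact h'.congr_deriv (by simp; ring)
      exact h1.hasDerivWithinAt
    · intro x _
      exact aux_g1_nonneg' x
  have h0 : (fun x : ℝ => (x - 2) * Real.exp x + x + 2) 0 = 0 := by simp
  have := hmono (self_mem_Ici) hx hx
  simpa [h0] using this

private lemma aux_exp_sub_nonneg (x : ℝ) : 0 ≤ Real.exp x - 1 - x := by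
  have := Real.add_one_le_exp x; linarith

private lemma aux_F_mono : Monotone (fun x : ℝ => Real.exp x - 1 - x - x ^ 2 / 2) := by
  apply monotone_of_hasDerivAt_nonneg (f' := fun x => Real.exp x - 1 - x)
  · intro x
    have h := (((Real.hasDerivAt_exp x).sub_const 1).sub (hasDerivAt_id x)).sub
      (((hasDerivAt_pow 2 x)).div_const 2)
    exact h.congr_deriv (by simp)
  · intro x
    exact aux_exp_sub_nonneg x

private lemma aux_f_mono : MonotoneOn
    (fun x : ℝ => (Real.exp x - 1 - x) / x ^ 2) (Ioi 0) := by
  apply monotoneOn_of_hasDerivWithinAt_nonneg (f' := fun x =>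
      ((Real.exp x - 1) * x ^ 2 - (Real.exp x - 1 - x) * (2 * x)) / (x ^ 2) ^ 2)
    (convex_Ioi 0)
  · apply ContinuousOn.div
    · fun_prop
    · fun_prop
    · intro x hx
      exact pow_ne_zero 2 (ne_of_gt hx)
  · intro x hx
    rw [interior_Ioi] at hx
    have hx0 : (x : ℝ) ^ 2 ≠ 0 := pow_ne_zero 2 (ne_of_gt hx)
    have h1 : HasDerivAt (fun x : ℝ => Real.exp x - 1 - x) (Real.exp x - 1) x := by
      have h := ((Real.hasDerivAt_exp x).sub_const 1).sub (hasDerivAt_id x)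
      exact h
    have h2 : HasDerivAt (fun x : ℝ => x ^ 2) (2 * x) x := by
      simpa using hasDerivAt_pow 2 x
    exact ((h1.div h2 hx0)).hasDerivWithinAt
  · intro x hx
    rw [interior_Ioi] at hx
    have key : 0 ≤ (x - 2) * Real.exp x + x + 2 := aux_g_nonneg hx.le
    have hnum : 0 ≤ (Real.exp x - 1) * x ^ 2 - (Real.exp x - 1 - x) * (2 * x) := by
      nlinarith [(mem_Ioi.mp hx).le, mul_nonneg (mem_Ioi.mp hx).le key]
    positivity

theorem exp_le_quadratic_upper (t y u : ℝ) (ht : 0 < t) (hy : 0 < y) (hu : u ≤ y) :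
    Real.exp (t * u) ≤ 1 + t * u + (Real.exp (t * y) - 1 - t * y) / y ^ 2 * u ^ 2 := by
  set v := t * u with hv
  set w := t * y with hw
  have hw0 : 0 < w := mul_pos ht hy
  have hvw : v ≤ w := by
    have := mul_le_mul_of_nonneg_left hu ht.le
    simpa [hv, hw] using this
  -- key inequality: (exp v - 1 - v) * w^2 ≤ (exp w - 1 - w) * v^2
  have key : (Real.exp v - 1 - v) * w ^ 2 ≤ (Real.exp w - 1 - w) * v ^ 2 := by
    rcases lt_trichotomy v 0 with hvneg | hv0 | hvpos
    · -- v < 0: use exp v ≤ 1 + v + v^2/2 and exp w ≥ 1 + w + w^2/2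
      have hB : Real.exp v - 1 - v ≤ v ^ 2 / 2 := by
        have := aux_F_mono (le_of_lt hvneg)
        simp only at this
        simpa using this
      have hA : w ^ 2 / 2 ≤ Real.exp w - 1 - w := by
        have := aux_F_mono hw0.le
        simp only at this
        simpa using this
      nlinarith [sq_nonneg v, sq_nonneg w, aux_exp_sub_nonneg v]
    · simp [hv0]
    · have hmono := aux_f_mono (mem_Ioi.mpr hvpos) (mem_Ioi.mpr (lt_of_lt_of_le hvpos hvw)) hvw
      simp only at hmono
      have hv2 : (0:ℝ) < v ^ 2 := by positivity
      have hw2 : (0:ℝ) < w ^ 2 := by positivity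
      rw [div_le_div_iff₀ hv2 hw2] at hmono
      linarith
  -- now convert: (exp w - 1 - w)/y^2 * u^2 = (exp w - 1 - w) * v^2 / w^2 ... 
  have ht2 : (0:ℝ) < t ^ 2 := by positivity
  have hy2 : (0:ℝ) < y ^ 2 := by positivity
  have hw2 : (0:ℝ) < w ^ 2 := by positivity
  have heq : (Real.exp w - 1 - w) / y ^ 2 * u ^ 2 = (Real.exp w - 1 - w) * v ^ 2 / w ^ 2 := by
    rw [hv, hw]
    field_simp
  rw [heq]
  have h2 : Real.exp v - 1 - v ≤ (Real.exp w - 1 - w) * v ^ 2 / w ^ 2 := by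
    rw [le_div_iff₀ hw2]
    exact key
  linarith
end

section
/- Let (s_n) be a sequence of positive reals with s_n² = ∑_{i=1}^n σ_i² for nonnegative σ_i², s_n² → ∞, and limsup_{n→∞} s_{n+1}²/s_n² < ∞. Then for every δ > 0, ∑_{n} s_n^{−2} (log s_n²)^{δ−1} σ_n² = ∞, where log x := ln max(e,x). -/
open Filter

private lemma sum_log_pow_diverges_aux (σ : ℕ → ℝ) (hσ : ∀ n, 0 ≤ σ n)
    (s2 : ℕ → ℝ) (hs2 : ∀ n, s2 n = ∑ i ∈ Finset.range (n + 1), σ i)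
    (hpos : ∀ n, 0 < s2 n)
    (htend : Tendsto s2 atTop atTop)
    (hratio : ∃ C : ℝ, ∀ᶠ n in atTop, s2 (n + 1) / s2 n ≤ C)
    (δ : ℝ) (hδ : 0 < δ) (hδ1 : δ ≤ 1) :
    ¬ Summable (fun n => (s2 n)⁻¹ *
        Real.log (max (Real.exp 1) (s2 n)) ^ (δ - 1) * σ n) := by
  intro hsum
  set f : ℕ → ℝ := fun n => (s2 n)⁻¹ *
      Real.log (max (Real.exp 1) (s2 n)) ^ (δ - 1) * σ n with hf
  have hmono : Monotone s2 := by
    apply monotone_nat_of_le_succ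
    intro n
    rw [hs2 n, hs2 (n + 1)]
    apply Finset.sum_le_sum_of_subset_of_nonneg
    · exact Finset.range_subset_range.2 (by omega)
    · exact fun i _ _ => hσ i
  have hσsucc : ∀ n, σ (n + 1) = s2 (n + 1) - s2 n := by
    intro n
    rw [hs2 (n + 1), hs2 n, Finset.sum_range_succ]
    ring
  have hf0 : ∀ n, 0 ≤ f n := by
    intro n
    have hL : (0:ℝ) ≤ Real.log (max (Real.exp 1) (s2 n)) := by
      apply Real.log_nonneg
      exact le_trans (by linarith [Real.add_one_le_exp (1:ℝ)]) (le_max_left _ _)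
    exact mul_nonneg (mul_nonneg (inv_nonneg.2 (hpos n).le)
      (Real.rpow_nonneg hL _)) (hσ n)
  obtain ⟨C, hC⟩ := hratio
  set C' : ℝ := max C 1 with hC'def
  have hC'1 : (1:ℝ) ≤ C' := le_max_right _ _
  have hCev : ∀ᶠ n in atTop, s2 (n + 1) ≤ C' * s2 n := by
    filter_upwards [hC] with n hn
    have h1 : s2 (n + 1) ≤ C * s2 n := (div_le_iff₀ (hpos n)).1 hn
    have h2 : C * s2 n ≤ C' * s2 n :=
      mul_le_mul_of_nonneg_right (le_max_left _ _) (hpos n).le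
    linarith
  obtain ⟨N1, hN1⟩ := eventually_atTop.1 hCev
  obtain ⟨N2, hN2⟩ := eventually_atTop.1
    (htend.eventually_ge_atTop (Real.exp (max 1 (2 * Real.log C'))))
  set N : ℕ := max N1 N2 with hNdef
  set K : ℝ := δ * (2:ℝ) ^ (1 - δ) * C' with hKdef
  have hK0 : 0 ≤ K :=
    mul_nonneg (mul_nonneg hδ.le (Real.rpow_nonneg (by norm_num) _)) (by linarith)
  -- basic facts for n ≥ N
  have hbase : ∀ n, N ≤ n → Real.exp 1 ≤ s2 n ∧ 1 ≤ Real.log (s2 n) ∧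
      2 * Real.log C' ≤ Real.log (s2 n) := by
    intro n hn
    have hTn : Real.exp (max 1 (2 * Real.log C')) ≤ s2 n :=
      hN2 n (le_trans (le_max_right _ _) hn)
    have hun : max 1 (2 * Real.log C') ≤ Real.log (s2 n) :=
      (Real.le_log_iff_exp_le (hpos n)).2 hTn
    refine ⟨le_trans (Real.exp_le_exp.2 (le_max_left _ _)) hTn, ?_, ?_⟩
    · exact le_trans (le_max_left _ _) hun
    · exact le_trans (le_max_right _ _) hun
  -- the key telescoping bound
  have hkey : ∀ n, N ≤ n →
      Real.log (s2 (n + 1)) ^ δ - Real.log (s2 n) ^ δ ≤ K * f (n + 1) := by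
    intro n hn
    obtain ⟨hexp, hu1, hu2C⟩ := hbase n hn
    set u : ℝ := Real.log (s2 n) with hu
    set v : ℝ := Real.log (s2 (n + 1)) with hv
    have hmn : s2 n ≤ s2 (n + 1) := hmono (Nat.le_succ n)
    have huv : u ≤ v := Real.log_le_log (hpos n) hmn
    have hv1 : 1 ≤ v := le_trans hu1 huv
    have hCn : s2 (n + 1) ≤ C' * s2 n := hN1 n (le_trans (le_max_left _ _) hn)
    have hvu : v ≤ u + Real.log C' := by
      have h1 : s2 (n + 1) / s2 n ≤ C' := (div_le_iff₀ (hpos n)).2 hCn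
      have h2 : Real.log (s2 (n + 1) / s2 n) ≤ Real.log C' :=
        Real.log_le_log (div_pos (hpos (n + 1)) (hpos n)) h1
      rw [Real.log_div (ne_of_gt (hpos (n + 1))) (ne_of_gt (hpos n))] at h2
      linarith
    have hv2u : v / 2 ≤ u := by linarith
    have hu0 : (0:ℝ) < u := by linarith
    -- Bernoulli step
    have hs : (-1:ℝ) ≤ (v - u) / u := by
      have := div_nonneg (by linarith : (0:ℝ) ≤ v - u) hu0.le
      linarith
    have hb := rpow_one_add_le_one_add_mul_self hs hδ.le hδ1
    have c1 : v ^ δ ≤ u ^ δ + δ * u ^ (δ - 1) * (v - u) := by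
      have hvrw : v = u * (1 + (v - u) / u) := by field_simp; ring
      calc v ^ δ = (u * (1 + (v - u) / u)) ^ δ := by rw [← hvrw]
        _ = u ^ δ * (1 + (v - u) / u) ^ δ :=
            Real.mul_rpow hu0.le (by linarith)
        _ ≤ u ^ δ * (1 + δ * ((v - u) / u)) :=
            mul_le_mul_of_nonneg_left hb (Real.rpow_nonneg hu0.le _)
        _ = u ^ δ + δ * (u ^ δ / u) * (v - u) := by field_simp
        _ = u ^ δ + δ * u ^ (δ - 1) * (v - u) := by
            rw [Real.rpow_sub_one (ne_of_gt hu0)]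
    -- bound on u^(δ-1)
    have c2 : u ^ (δ - 1) ≤ (2:ℝ) ^ (1 - δ) * v ^ (δ - 1) := by
      have h1 : u ^ (δ - 1) ≤ (v / 2) ^ (δ - 1) :=
        Real.rpow_le_rpow_of_nonpos (by linarith) hv2u (by linarith)
      have h2 : (v / 2) ^ (δ - 1) = (2:ℝ) ^ (1 - δ) * v ^ (δ - 1) := by
        rw [Real.div_rpow (by linarith) (by norm_num), div_eq_mul_inv,
          ← Real.rpow_neg (by norm_num), neg_sub]
        ring
      linarith [h1, h2.le, h2.ge]
    -- bound on v - u
    have c3 : v - u ≤ σ (n + 1) / s2 n := by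
      have h1 : v - u = Real.log (s2 (n + 1) / s2 n) :=
        (Real.log_div (ne_of_gt (hpos (n + 1))) (ne_of_gt (hpos n))).symm
      have h2 : Real.log (s2 (n + 1) / s2 n) ≤ s2 (n + 1) / s2 n - 1 :=
        Real.log_le_sub_one_of_pos (div_pos (hpos (n + 1)) (hpos n))
      have h3 : s2 (n + 1) / s2 n - 1 = σ (n + 1) / s2 n := by
        rw [hσsucc n, sub_div, div_self (ne_of_gt (hpos n))]
      linarith
    have c4 : σ (n + 1) / s2 n ≤ C' * σ (n + 1) / s2 (n + 1) := by
      rw [div_le_div_iff₀ (hpos n) (hpos (n + 1))]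
      nlinarith [hσ (n + 1), hCn, (hpos n).le]
    have hvp : (0:ℝ) ≤ v ^ (δ - 1) := Real.rpow_nonneg (by linarith) _
    have hcp : (0:ℝ) ≤ δ * ((2:ℝ) ^ (1 - δ) * v ^ (δ - 1)) :=
      mul_nonneg hδ.le (mul_nonneg (Real.rpow_nonneg (by norm_num) _) hvp)
    have hmax : max (Real.exp 1) (s2 (n + 1)) = s2 (n + 1) :=
      max_eq_right (le_trans hexp hmn)
    have hup : (0:ℝ) ≤ u ^ (δ - 1) := Real.rpow_nonneg hu0.le _
    have main : v ^ δ - u ^ δ ≤ K * ((s2 (n + 1))⁻¹ * v ^ (δ - 1) * σ (n + 1)) := by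
      calc v ^ δ - u ^ δ ≤ δ * u ^ (δ - 1) * (v - u) := by linarith
        _ ≤ δ * ((2:ℝ) ^ (1 - δ) * v ^ (δ - 1)) * (σ (n + 1) / s2 n) := by
            apply mul_le_mul (mul_le_mul_of_nonneg_left c2 hδ.le) c3
              (by linarith) hcp
        _ ≤ δ * ((2:ℝ) ^ (1 - δ) * v ^ (δ - 1)) * (C' * σ (n + 1) / s2 (n + 1)) :=
            mul_le_mul_of_nonneg_left c4 hcp
        _ = K * ((s2 (n + 1))⁻¹ * v ^ (δ - 1) * σ (n + 1)) := by
            rw [hKdef]; ring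
    simpa [hf, hmax] using main
  -- telescoping
  set S : ℝ := ∑' n, f n with hS
  have htel : ∀ m, Real.log (s2 (N + m)) ^ δ ≤ Real.log (s2 N) ^ δ + K * S := by
    intro m
    have h1 : ∑ i ∈ Finset.range m,
        (Real.log (s2 (N + i + 1)) ^ δ - Real.log (s2 (N + i)) ^ δ)
        = Real.log (s2 (N + m)) ^ δ - Real.log (s2 N) ^ δ := by
      have := Finset.sum_range_sub (fun i => Real.log (s2 (N + i)) ^ δ) m
      exact this
    have h2 : ∑ i ∈ Finset.range m,
        (Real.log (s2 (N + i + 1)) ^ δ - Real.log (s2 (N + i)) ^ δ)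
        ≤ ∑ i ∈ Finset.range m, K * f (N + i + 1) :=
      Finset.sum_le_sum (fun i _ => hkey (N + i) (Nat.le_add_right N i))
    have h3 : ∑ i ∈ Finset.range m, f (N + i + 1) ≤ S := by
      have hemb : Function.Injective (fun i : ℕ => N + i + 1) := fun a b h => by
        simpa using h
      have := Summable.sum_le_tsum ((Finset.range m).map ⟨_, hemb⟩)
        (fun i _ => hf0 i) hsum
      rwa [Finset.sum_map] at this
    have h4 : ∑ i ∈ Finset.range m, K * f (N + i + 1)
        = K * ∑ i ∈ Finset.range m, f (N + i + 1) := by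
      rw [Finset.mul_sum]
    nlinarith [mul_le_mul_of_nonneg_left h3 hK0]
  have hg : Tendsto (fun n => Real.log (s2 n) ^ δ) atTop atTop :=
    (tendsto_rpow_atTop hδ).comp (Real.tendsto_log_atTop.comp htend)
  have hdiv : Tendsto (fun m => Real.log (s2 (N + m)) ^ δ) atTop atTop :=
    hg.comp (tendsto_atTop_mono (fun m => Nat.le_add_left m N) tendsto_id)
  obtain ⟨m, hm⟩ := (hdiv.eventually
    (eventually_gt_atTop (Real.log (s2 N) ^ δ + K * S))).exists
  exact absurd (htel m) (not_le.2 hm)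

theorem sum_log_pow_diverges (σ : ℕ → ℝ) (hσ : ∀ n, 0 ≤ σ n)
    (s2 : ℕ → ℝ) (hs2 : ∀ n, s2 n = ∑ i ∈ Finset.range (n + 1), σ i)
    (hpos : ∀ n, 0 < s2 n)
    (htend : Tendsto s2 atTop atTop)
    (hratio : ∃ C : ℝ, ∀ᶠ n in atTop, s2 (n + 1) / s2 n ≤ C) :
    ∀ δ : ℝ, 0 < δ →
      ¬ Summable (fun n => (s2 n)⁻¹ *
        Real.log (max (Real.exp 1) (s2 n)) ^ (δ - 1) * σ n) := by
  intro δ hδ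
  rcases le_or_gt δ 1 with h1 | h1
  · exact sum_log_pow_diverges_aux σ hσ s2 hs2 hpos htend hratio δ hδ h1
  · intro hsum
    apply sum_log_pow_diverges_aux σ hσ s2 hs2 hpos htend hratio 1 one_pos le_rfl
    apply Summable.of_nonneg_of_le _ _ hsum
    · intro n
      have hL : (1:ℝ) ≤ Real.log (max (Real.exp 1) (s2 n)) :=
        (Real.le_log_iff_exp_le (lt_max_of_lt_left (Real.exp_pos 1))).2
          (le_max_left _ _)
      exact mul_nonneg (mul_nonneg (inv_nonneg.2 (hpos n).le)
        (Real.rpow_nonneg (by linarith) _)) (hσ n)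
    · intro n
      have hL : (1:ℝ) ≤ Real.log (max (Real.exp 1) (s2 n)) :=
        (Real.le_log_iff_exp_le (lt_max_of_lt_left (Real.exp_pos 1))).2
          (le_max_left _ _)
      have hpow : Real.log (max (Real.exp 1) (s2 n)) ^ ((1:ℝ) - 1)
          ≤ Real.log (max (Real.exp 1) (s2 n)) ^ (δ - 1) :=
        Real.rpow_le_rpow_of_exponent_le hL (by linarith)
      exact mul_le_mul_of_nonneg_right
        (mul_le_mul_of_nonneg_left hpow (inv_nonneg.2 (hpos n).le)) (hσ n)
end

section
/- Let (a_n) be a nondecreasing sequence of positive reals with a_n → ∞ and a_{n+1}/a_n → 1. Then for every λ > 1 there exists a strictly increasing sequence (n_k) of natural numbers such that λ·a_{n_k} ≤ a_{n_{k+1}} ≤ λ³·a_{n_k + 1} for all k. -/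
open Filter

theorem wittmann_block_selection (a : ℕ → ℝ) (hpos : ∀ n, 0 < a n)
    (hmono : Monotone a) (htend : Tendsto a atTop atTop)
    (hratio : Tendsto (fun n => a (n + 1) / a n) atTop (nhds 1)) :
    ∀ lam : ℝ, 1 < lam →
      ∃ n : ℕ → ℕ, StrictMono n ∧
        ∀ k, lam * a (n k) ≤ a (n (k + 1)) ∧ a (n (k + 1)) ≤ lam ^ 3 * a (n k + 1) := by
  intro lam hlam
  have hlam0 : (0:ℝ) < lam := lt_trans zero_lt_one hlam
  have hev : ∀ᶠ n in atTop, a (n + 1) / a n ≤ lam :=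
    hratio.eventually (eventually_le_nhds hlam)
  obtain ⟨N, hN⟩ := eventually_atTop.mp hev
  have hNle : ∀ p, N ≤ p → a (p + 1) ≤ lam * a p := by
    intro p hp
    have h := hN p hp
    have hap := hpos p
    rw [div_le_iff₀ hap] at h
    linarith
  have hex : ∀ p : ℕ, ∃ m, p < m ∧ lam * a p ≤ a m := by
    intro p
    obtain ⟨M, hM⟩ := eventually_atTop.mp (tendsto_atTop.mp htend (lam * a p))
    exact ⟨max M (p + 1), lt_of_lt_of_le (Nat.lt_succ_self p) (le_max_right _ _),
      hM _ (le_max_left _ _)⟩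
  set next : ℕ → ℕ := fun p => Nat.find (hex p) with hnext
  set f : ℕ → ℕ := fun k => Nat.rec N (fun _ ih => next ih) k with hf
  have hspec : ∀ p, p < next p ∧ lam * a p ≤ a (next p) := fun p => Nat.find_spec (hex p)
  have hfN : ∀ k, N ≤ f k := by
    intro k
    induction k with
    | zero => exact le_refl N
    | succ k ih => exact le_trans ih (le_of_lt (hspec (f k)).1)
  have hsm : StrictMono f := strictMono_nat_of_lt_succ (fun k => (hspec (f k)).1)
  refine ⟨f, hsm, fun k => ?_⟩
  have hlow := (hspec (f k)).2
  refine ⟨hlow, ?_⟩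
  set p := f k with hp
  set m := next p with hm
  have hpm : p < m := (hspec p).1
  have hlam3 : (1:ℝ) ≤ lam ^ 3 := by nlinarith [mul_nonneg (sq_nonneg lam) (by linarith : (0:ℝ) ≤ lam - 1), sq_nonneg (lam - 1)]
  have hgoal : f (k + 1) = m := rfl
  rw [hgoal]
  rcases eq_or_lt_of_le (Nat.succ_le_of_lt hpm) with heq | hlt
  · -- m = p + 1
    rw [← heq]
    have := hpos (p + 1)
    nlinarith
  · -- p + 1 < m
    have hm1 : m - 1 < m := Nat.sub_lt (Nat.lt_of_le_of_lt (Nat.zero_le p) hpm) one_pos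
    have hmin := Nat.find_min (hex p) hm1
    push_neg at hmin
    have hpm1 : p < m - 1 := by omega
    have hupper : a (m - 1) < lam * a p := hmin hpm1
    have hm1N : N ≤ m - 1 := le_trans (hfN k) (le_of_lt hpm1)
    have hstep : a ((m - 1) + 1) ≤ lam * a (m - 1) := hNle _ hm1N
    have hmm : (m - 1) + 1 = m := by omega
    rw [hmm] at hstep
    have hmono' : a p ≤ a (p + 1) := hmono (Nat.le_succ p)
    have h1 := hpos p
    have h2 := hpos (p + 1)
    have hl2 : lam ^ 2 ≤ lam ^ 3 := by
      nlinarith [mul_nonneg (sq_nonneg lam) (by linarith : (0:ℝ) ≤ lam - 1)]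
    calc a m ≤ lam * a (m - 1) := hstep
      _ ≤ lam * (lam * a p) := by nlinarith
      _ ≤ lam * (lam * a (p + 1)) := by nlinarith
      _ = lam ^ 2 * a (p + 1) := by ring
      _ ≤ lam ^ 3 * a (p + 1) := mul_le_mul_of_nonneg_right hl2 h2.le
end

section
/- Let X be a nonnegative random variable on a probability space. Then for every δ > 0, ∑_{n=1}^∞ P(X ≥ δ·√(n·loglog n)) < ∞ if and only if E[X²/loglog X] < ∞, where loglog x := ln max(e, ln max(e,x)). -/
open MeasureTheory
open scoped ENNReal

/-- `loglog x = ln (max e (ln (max e x)))`. -/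
noncomputable def loglog (x : ℝ) : ℝ :=
  Real.log (max (Real.exp 1) (Real.log (max (Real.exp 1) x)))

lemma e_pos : (0:ℝ) < Real.exp 1 := Real.exp_pos 1

lemma max_e_pos (x : ℝ) : (0:ℝ) < max (Real.exp 1) x := lt_max_of_lt_left e_pos

lemma one_le_log_max (x : ℝ) : 1 ≤ Real.log (max (Real.exp 1) x) := by
  calc (1:ℝ) = Real.log (Real.exp 1) := (Real.log_exp 1).symm
    _ ≤ _ := Real.log_le_log e_pos (le_max_left _ _)

lemma one_le_loglog (x : ℝ) : 1 ≤ loglog x := one_le_log_max _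

lemma loglog_pos (x : ℝ) : 0 < loglog x := lt_of_lt_of_le one_pos (one_le_loglog x)

lemma loglog_mono : Monotone loglog := by
  intro a b hab
  unfold loglog
  exact Real.log_le_log (max_e_pos _) (max_le_max le_rfl
    (Real.log_le_log (max_e_pos _) (max_le_max le_rfl hab)))

lemma loglog_le_max (x : ℝ) : loglog x ≤ max (Real.exp 1) x := by
  have h1 : Real.log (max (Real.exp 1) x) ≤ max (Real.exp 1) x :=
    Real.log_le_self (max_e_pos x).le
  calc loglog x ≤ max (Real.exp 1) (Real.log (max (Real.exp 1) x)) :=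
        Real.log_le_self (max_e_pos _).le
    _ ≤ max (Real.exp 1) (max (Real.exp 1) x) := max_le_max le_rfl h1
    _ = max (Real.exp 1) x := by rw [← max_assoc, max_self]

lemma loglog_mul_le {c : ℝ} (hc : 1 ≤ c) (x : ℝ) :
    loglog (c * x) ≤ loglog x + Real.log (1 + Real.log c) := by
  have hc0 : (0:ℝ) < c := lt_of_lt_of_le one_pos hc
  have hlc : 0 ≤ Real.log c := Real.log_nonneg hc
  -- max e (c*x) ≤ c * max e x
  have h1 : max (Real.exp 1) (c * x) ≤ c * max (Real.exp 1) x := by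
    apply max_le
    · nlinarith [le_max_left (Real.exp 1) x, e_pos]
    · exact mul_le_mul_of_nonneg_left (le_max_right _ _) hc0.le
  have h2 : Real.log (max (Real.exp 1) (c * x)) ≤ Real.log (max (Real.exp 1) x) + Real.log c := by
    calc Real.log (max (Real.exp 1) (c * x)) ≤ Real.log (c * max (Real.exp 1) x) :=
          Real.log_le_log (max_e_pos _) h1
      _ = Real.log c + Real.log (max (Real.exp 1) x) :=
          Real.log_mul (ne_of_gt hc0) (ne_of_gt (max_e_pos x))
      _ = _ := by ring
  -- second level
  have h3 : max (Real.exp 1) (Real.log (max (Real.exp 1) (c * x)))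
      ≤ max (Real.exp 1) (Real.log (max (Real.exp 1) x)) + Real.log c := by
    apply max_le
    · have : Real.exp 1 ≤ max (Real.exp 1) (Real.log (max (Real.exp 1) x)) := le_max_left _ _
      linarith
    · calc Real.log (max (Real.exp 1) (c * x))
          ≤ Real.log (max (Real.exp 1) x) + Real.log c := h2
        _ ≤ max (Real.exp 1) (Real.log (max (Real.exp 1) x)) + Real.log c := by
            have := le_max_right (Real.exp 1) (Real.log (max (Real.exp 1) x)); linarith
  have hM1 : 1 ≤ max (Real.exp 1) (Real.log (max (Real.exp 1) x)) := by
    have := one_le_log_max x; exact le_max_of_le_right this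
  have h4 : max (Real.exp 1) (Real.log (max (Real.exp 1) x)) + Real.log c
      ≤ max (Real.exp 1) (Real.log (max (Real.exp 1) x)) * (1 + Real.log c) := by
    nlinarith
  unfold loglog
  calc Real.log (max (Real.exp 1) (Real.log (max (Real.exp 1) (c * x))))
      ≤ Real.log (max (Real.exp 1) (Real.log (max (Real.exp 1) x)) * (1 + Real.log c)) :=
        Real.log_le_log (max_e_pos _) (le_trans h3 h4)
    _ = Real.log (max (Real.exp 1) (Real.log (max (Real.exp 1) x))) + Real.log (1 + Real.log c) :=
        Real.log_mul (ne_of_gt (max_e_pos _)) (by positivity)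

lemma loglog_sq_le {x : ℝ} (hx : 0 ≤ x) : loglog (x ^ 2) ≤ loglog x + Real.log 2 := by
  have h1 : max (Real.exp 1) (x ^ 2) ≤ (max (Real.exp 1) x) ^ 2 := by
    apply max_le
    · nlinarith [Real.exp_one_gt_d9, le_max_left (Real.exp 1) x, e_pos]
    · have : x ≤ max (Real.exp 1) x := le_max_right _ _
      nlinarith
  have h2 : Real.log (max (Real.exp 1) (x ^ 2)) ≤ 2 * Real.log (max (Real.exp 1) x) := by
    calc Real.log (max (Real.exp 1) (x ^ 2)) ≤ Real.log ((max (Real.exp 1) x) ^ 2) :=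
          Real.log_le_log (max_e_pos _) h1
      _ = 2 * Real.log (max (Real.exp 1) x) := by
          rw [Real.log_pow]; push_cast; ring
  have h3 : max (Real.exp 1) (Real.log (max (Real.exp 1) (x ^ 2)))
      ≤ 2 * max (Real.exp 1) (Real.log (max (Real.exp 1) x)) := by
    apply max_le
    · have := le_max_left (Real.exp 1) (Real.log (max (Real.exp 1) x)); linarith [e_pos]
    · calc Real.log (max (Real.exp 1) (x ^ 2)) ≤ 2 * Real.log (max (Real.exp 1) x) := h2
        _ ≤ 2 * max (Real.exp 1) (Real.log (max (Real.exp 1) x)) := by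
            have := le_max_right (Real.exp 1) (Real.log (max (Real.exp 1) x)); linarith
  unfold loglog
  calc Real.log (max (Real.exp 1) (Real.log (max (Real.exp 1) (x ^ 2))))
      ≤ Real.log (2 * max (Real.exp 1) (Real.log (max (Real.exp 1) x))) :=
        Real.log_le_log (max_e_pos _) h3
    _ = Real.log 2 + Real.log (max (Real.exp 1) (Real.log (max (Real.exp 1) x))) :=
        Real.log_mul two_ne_zero (ne_of_gt (max_e_pos _))
    _ = _ := by ring

lemma measurable_loglog : Measurable loglog := by
  unfold loglog
  exact Real.measurable_log.comp ((measurable_const.max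
    (Real.measurable_log.comp (measurable_const.max measurable_id))))

lemma loglog_add_le_mul {x c : ℝ} (hc : 0 ≤ c) : loglog x + c ≤ (1 + c) * loglog x := by
  nlinarith [one_le_loglog x]

lemma key1 {δ x : ℝ} (hδ : 0 < δ) (hx : 0 ≤ x) :
    loglog x ≤ (1 + Real.log (1 + Real.log (max 1 δ))) * loglog (x / δ) := by
  have hxd : 0 ≤ x / δ := div_nonneg hx hδ.le
  have hc : (1:ℝ) ≤ max 1 δ := le_max_left _ _
  have h0 : x ≤ max 1 δ * (x / δ) := by
    rw (occs := .pos [1]) [← div_mul_cancel₀ x (ne_of_gt hδ)]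
    calc x / δ * δ = δ * (x / δ) := by ring
      _ ≤ max 1 δ * (x / δ) := mul_le_mul_of_nonneg_right (le_max_right _ _) hxd
  have hb : 0 ≤ Real.log (1 + Real.log (max 1 δ)) :=
    Real.log_nonneg (by linarith [Real.log_nonneg hc])
  calc loglog x ≤ loglog (max 1 δ * (x / δ)) := loglog_mono h0
    _ ≤ loglog (x / δ) + Real.log (1 + Real.log (max 1 δ)) := loglog_mul_le hc _
    _ ≤ _ := loglog_add_le_mul hb

lemma key2 {δ x : ℝ} (hδ : 0 < δ) (hx : 0 ≤ x) :
    loglog ((x / δ) ^ 2)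
      ≤ (1 + (Real.log 2 + Real.log (1 + Real.log (max 1 (1 / δ ^ 2))))) * loglog x := by
  have hc : (1:ℝ) ≤ max 1 (1 / δ ^ 2) := le_max_left _ _
  have h0 : (x / δ) ^ 2 ≤ max 1 (1 / δ ^ 2) * x ^ 2 := by
    rw [div_pow]
    calc x ^ 2 / δ ^ 2 = 1 / δ ^ 2 * x ^ 2 := by ring
      _ ≤ max 1 (1 / δ ^ 2) * x ^ 2 :=
          mul_le_mul_of_nonneg_right (le_max_right _ _) (sq_nonneg _)
  have hb : 0 ≤ Real.log 2 + Real.log (1 + Real.log (max 1 (1 / δ ^ 2))) := by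
    have h2 : 0 ≤ Real.log 2 := Real.log_nonneg one_le_two
    have h3 : 0 ≤ Real.log (1 + Real.log (max 1 (1 / δ ^ 2))) :=
      Real.log_nonneg (by linarith [Real.log_nonneg hc])
    linarith
  calc loglog ((x / δ) ^ 2) ≤ loglog (max 1 (1 / δ ^ 2) * x ^ 2) := loglog_mono h0
    _ ≤ loglog (x ^ 2) + Real.log (1 + Real.log (max 1 (1 / δ ^ 2))) := loglog_mul_le hc _
    _ ≤ loglog x + Real.log 2 + Real.log (1 + Real.log (max 1 (1 / δ ^ 2))) := by
        linarith [loglog_sq_le hx]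
    _ ≤ _ := by have := loglog_add_le_mul (x := x) hb; linarith

lemma count_upper {δ x : ℝ} (hδ : 0 < δ) (n : ℕ)
    (h : δ * Real.sqrt (((n:ℝ) + 1) * loglog ((n:ℝ) + 1)) ≤ x) :
    (n : ℝ) < x / δ + (x / δ) ^ 2 / loglog (x / δ) := by
  have hll : 1 ≤ loglog ((n:ℝ) + 1) := one_le_loglog _
  have ha : 0 ≤ ((n:ℝ) + 1) * loglog ((n:ℝ) + 1) := by positivity
  have hx : 0 ≤ x := le_trans (by positivity) h
  have hs : Real.sqrt (((n:ℝ) + 1) * loglog ((n:ℝ) + 1)) ≤ x / δ :=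
    (le_div_iff₀' hδ).mpr h
  have hay : ((n:ℝ) + 1) * loglog ((n:ℝ) + 1) ≤ (x / δ) ^ 2 := by
    calc ((n:ℝ) + 1) * loglog ((n:ℝ) + 1)
        = Real.sqrt (((n:ℝ) + 1) * loglog ((n:ℝ) + 1)) ^ 2 := (Real.sq_sqrt ha).symm
      _ ≤ (x / δ) ^ 2 := by
          apply pow_le_pow_left₀ (Real.sqrt_nonneg _) hs _
  rcases le_or_gt ((n:ℝ) + 1) (x / δ) with hc | hc
  · have : 0 ≤ (x / δ) ^ 2 / loglog (x / δ) :=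
      div_nonneg (sq_nonneg _) (loglog_pos _).le
    nlinarith [loglog_pos (x/δ)]
  · have h2 : loglog (x / δ) ≤ loglog ((n:ℝ) + 1) := loglog_mono hc.le
    have h3 : ((n:ℝ) + 1) * loglog (x / δ) ≤ (x / δ) ^ 2 := by
      calc ((n:ℝ) + 1) * loglog (x / δ) ≤ ((n:ℝ) + 1) * loglog ((n:ℝ) + 1) :=
            mul_le_mul_of_nonneg_left h2 (by positivity)
        _ ≤ (x / δ) ^ 2 := hay
    have h4 : ((n:ℝ) + 1) ≤ (x / δ) ^ 2 / loglog (x / δ) :=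
      (le_div_iff₀ (loglog_pos _)).mpr h3
    have hxd : 0 ≤ x / δ := div_nonneg hx hδ.le
    linarith

lemma count_lower {δ x : ℝ} (hδ : 0 < δ) (hx : 0 ≤ x) (n : ℕ)
    (h : (n : ℝ) + 1 ≤ (x / δ) ^ 2 / loglog ((x / δ) ^ 2)) :
    δ * Real.sqrt (((n:ℝ) + 1) * loglog ((n:ℝ) + 1)) ≤ x := by
  set y := (x / δ) ^ 2 with hy
  have hy0 : 0 ≤ y := sq_nonneg _
  have hlly : 1 ≤ loglog y := one_le_loglog _
  have h1 : (n:ℝ) + 1 ≤ y := le_trans h (div_le_self hy0 hlly)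
  have h2 : loglog ((n:ℝ) + 1) ≤ loglog y := loglog_mono h1
  have h3 : ((n:ℝ) + 1) * loglog ((n:ℝ) + 1) ≤ y := by
    calc ((n:ℝ) + 1) * loglog ((n:ℝ) + 1) ≤ (y / loglog y) * loglog y := by
          apply mul_le_mul h h2 (le_trans one_pos.le (one_le_loglog _))
          exact div_nonneg hy0 (loglog_pos _).le
      _ = y := div_mul_cancel₀ _ (ne_of_gt (loglog_pos _))
  have h4 : Real.sqrt (((n:ℝ) + 1) * loglog ((n:ℝ) + 1)) ≤ x / δ := by
    calc Real.sqrt (((n:ℝ) + 1) * loglog ((n:ℝ) + 1)) ≤ Real.sqrt y := Real.sqrt_le_sqrt h3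
      _ = x / δ := by rw [hy, Real.sqrt_sq (div_nonneg hx hδ.le)]
  calc δ * Real.sqrt (((n:ℝ) + 1) * loglog ((n:ℝ) + 1)) ≤ δ * (x / δ) :=
        mul_le_mul_of_nonneg_left h4 hδ.le
    _ = x := mul_div_cancel₀ x (ne_of_gt hδ)

lemma upper_real {δ x K : ℝ} (hδ : 0 < δ) (hx : 0 ≤ x)
    (hK : loglog x ≤ K * loglog (x / δ)) :
    x / δ + (x / δ) ^ 2 / loglog (x / δ) + 1 ≤
      (1 + Real.exp 1 / δ) + (1 / δ + K / δ ^ 2) * (x ^ 2 / loglog x) := by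
  have h1 : x ≤ Real.exp 1 + x ^ 2 / loglog x := by
    rcases le_or_gt x (Real.exp 1) with h | h
    · have := div_nonneg (sq_nonneg x) (loglog_pos x).le; linarith
    · have hm : loglog x ≤ x := le_trans (loglog_le_max x) (le_of_eq (max_eq_right h.le))
      have hpos := loglog_pos x
      have hxx : x ≤ x ^ 2 / loglog x := by
        rw [le_div_iff₀ hpos]; nlinarith [mul_le_mul_of_nonneg_left hm hx]
      linarith [e_pos]
  have h1' : x / δ ≤ Real.exp 1 / δ + (x ^ 2 / loglog x) / δ := by
    rw [← add_div]; gcongr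
  have h2 : (x / δ) ^ 2 / loglog (x / δ) ≤ K / δ ^ 2 * (x ^ 2 / loglog x) := by
    have e1 : (x / δ) ^ 2 = x ^ 2 / δ ^ 2 := div_pow x δ 2
    have hrw : K / δ ^ 2 * (x ^ 2 / loglog x) = K * x ^ 2 / (δ ^ 2 * loglog x) := by ring
    rw [e1, hrw, div_div,
      div_le_div_iff₀ (mul_pos (by positivity) (loglog_pos _)) (mul_pos (by positivity) (loglog_pos _))]
    nlinarith [mul_le_mul_of_nonneg_left hK (show (0:ℝ) ≤ x ^ 2 * δ ^ 2 by positivity)]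
  calc x / δ + (x / δ) ^ 2 / loglog (x / δ) + 1
      ≤ (Real.exp 1 / δ + x ^ 2 / loglog x / δ) + K / δ ^ 2 * (x ^ 2 / loglog x) + 1 := by
        linarith
    _ = (1 + Real.exp 1 / δ) + (1 / δ + K / δ ^ 2) * (x ^ 2 / loglog x) := by ring

lemma lower_real {δ x K : ℝ} (hδ : 0 < δ) (hx : 0 ≤ x) (hK0 : 0 ≤ K)
    (hK : loglog ((x / δ) ^ 2) ≤ K * loglog x) {k : ℕ}
    (hk : (x / δ) ^ 2 / loglog ((x / δ) ^ 2) ≤ (k : ℝ) + 1) :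
    x ^ 2 / loglog x ≤ δ ^ 2 * K * ((k : ℝ) + 1) := by
  set y := (x / δ) ^ 2 with hy
  have hy0 : (0:ℝ) ≤ y := sq_nonneg _
  have hxy : x ^ 2 = δ ^ 2 * y := by rw [hy]; field_simp
  have h1 : y / loglog x ≤ K * ((k : ℝ) + 1) := by
    calc y / loglog x ≤ K * y / loglog y := by
          rw [div_le_div_iff₀ (loglog_pos _) (loglog_pos _)]
          nlinarith [mul_le_mul_of_nonneg_left hK hy0]
      _ = K * (y / loglog y) := by ring
      _ ≤ K * ((k : ℝ) + 1) := mul_le_mul_of_nonneg_left hk hK0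
  calc x ^ 2 / loglog x = δ ^ 2 * (y / loglog x) := by rw [hxy]; ring
    _ ≤ δ ^ 2 * (K * ((k : ℝ) + 1)) := mul_le_mul_of_nonneg_left h1 (sq_nonneg δ)
    _ = δ ^ 2 * K * ((k : ℝ) + 1) := by ring

theorem tail_sum_iff_loglog_integrable {Ω : Type*} [MeasurableSpace Ω]
    (P : Measure Ω) [IsProbabilityMeasure P]
    (X : Ω → ℝ) (hmeas : Measurable X) (hnonneg : ∀ ω, 0 ≤ X ω) :
    ∀ δ : ℝ, 0 < δ →
      ((∑' n : ℕ, P {ω | δ * Real.sqrt ((n + 1) * loglog (n + 1)) ≤ X ω}) < ⊤ ↔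
        Integrable (fun ω => X ω ^ 2 / loglog (X ω)) P) := by
  intro δ hδ
  classical
  have hg0 : ∀ x : ℝ, 0 ≤ x ^ 2 / loglog x :=
    fun x => div_nonneg (sq_nonneg _) (loglog_pos _).le
  have smeas : ∀ n : ℕ,
      MeasurableSet {ω | δ * Real.sqrt ((n + 1) * loglog (n + 1)) ≤ X ω} :=
    fun n => measurableSet_le measurable_const hmeas
  set G : Ω → ℝ≥0∞ := fun ω =>
    ∑' n : ℕ, ({ω' | δ * Real.sqrt ((n + 1) * loglog (n + 1)) ≤ X ω'}).indicator 1 ω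
    with hGdef
  have hsum_eq : (∑' n : ℕ, P {ω | δ * Real.sqrt ((n + 1) * loglog (n + 1)) ≤ X ω})
      = ∫⁻ ω, G ω ∂P := by
    simp only [hGdef]
    rw [lintegral_tsum fun n => (measurable_one.indicator (smeas n)).aemeasurable]
    exact tsum_congr fun n => (lintegral_indicator_one (smeas n)).symm
  -- constants
  set K₁ : ℝ := 1 + Real.log (1 + Real.log (max 1 δ)) with hK₁def
  set K₂ : ℝ := 1 + (Real.log 2 + Real.log (1 + Real.log (max 1 (1 / δ ^ 2)))) with hK₂def
  have hK₁0 : 0 ≤ K₁ := by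
    have : 0 ≤ Real.log (1 + Real.log (max 1 δ)) :=
      Real.log_nonneg (by linarith [Real.log_nonneg (le_max_left 1 δ)])
    rw [hK₁def]; linarith
  have hK₂0 : 0 ≤ K₂ := by
    have h2 : (0:ℝ) ≤ Real.log 2 := Real.log_nonneg one_le_two
    have h3 : (0:ℝ) ≤ Real.log (1 + Real.log (max 1 (1 / δ ^ 2))) :=
      Real.log_nonneg (by linarith [Real.log_nonneg (le_max_left 1 (1 / δ ^ 2))])
    rw [hK₂def]; linarith
  -- pointwise upper bound for G
  have hG_upper : ∀ ω, G ω ≤ ENNReal.ofReal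
      ((1 + Real.exp 1 / δ) + (1 / δ + K₁ / δ ^ 2) * (X ω ^ 2 / loglog (X ω))) := by
    intro ω
    set x := X ω with hxdef
    have hx : 0 ≤ x := hnonneg ω
    set B : ℝ := x / δ + (x / δ) ^ 2 / loglog (x / δ) with hBdef
    have hB0 : 0 ≤ B :=
      add_nonneg (div_nonneg hx hδ.le) (div_nonneg (sq_nonneg _) (loglog_pos _).le)
    have hGx : G ω = ∑ n ∈ Finset.range ⌈B⌉₊,
        ({ω' | δ * Real.sqrt ((n + 1) * loglog (n + 1)) ≤ X ω'}).indicator 1 ω := by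
      simp only [hGdef]
      apply tsum_eq_sum
      intro n hn
      apply Set.indicator_of_notMem
      intro hmem
      simp only [Set.mem_setOf_eq, ← hxdef] at hmem
      have hlt : (n : ℝ) < B := count_upper hδ n hmem
      have hge : ⌈B⌉₊ ≤ n := by simpa [Finset.mem_range, not_lt] using hn
      have : B ≤ (n : ℝ) := le_trans (Nat.le_ceil B) (by exact_mod_cast Nat.cast_le.mpr hge)
      linarith
    calc G ω = ∑ n ∈ Finset.range ⌈B⌉₊,
          ({ω' | δ * Real.sqrt ((n + 1) * loglog (n + 1)) ≤ X ω'}).indicator 1 ω := hGx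
      _ ≤ ∑ _n ∈ Finset.range ⌈B⌉₊, 1 :=
          Finset.sum_le_sum fun n _ => Set.indicator_le_self' (fun _ _ => zero_le) ω
      _ = (⌈B⌉₊ : ℝ≥0∞) := by simp
      _ ≤ ENNReal.ofReal (B + 1) := by
          rw [← ENNReal.ofReal_natCast ⌈B⌉₊]
          exact ENNReal.ofReal_le_ofReal (Nat.ceil_lt_add_one hB0).le
      _ ≤ _ := ENNReal.ofReal_le_ofReal (upper_real hδ hx (key1 hδ hx))
  constructor
  · -- sum finite → integrable
    intro hfin
    rw [hsum_eq] at hfin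
    have hmg : Measurable fun ω => X ω ^ 2 / loglog (X ω) :=
      (hmeas.pow_const 2).div (measurable_loglog.comp hmeas)
    refine ⟨hmg.aestronglyMeasurable, ?_⟩
    rw [hasFiniteIntegral_iff_ofReal (Filter.Eventually.of_forall fun ω => hg0 (X ω))]
    have hpt : ∀ ω, ENNReal.ofReal (X ω ^ 2 / loglog (X ω))
        ≤ ENNReal.ofReal (δ ^ 2 * K₂) * (G ω + 1) := by
      intro ω
      set x := X ω with hxdef
      have hx : 0 ≤ x := hnonneg ω
      set y : ℝ := (x / δ) ^ 2 with hydef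
      set k : ℕ := ⌊y / loglog y⌋₊ with hkdef
      have hk1 : (k : ℝ≥0∞) ≤ G ω := by
        have hstep : ∀ n ∈ Finset.range k,
            (1:ℝ≥0∞) = ({ω' | δ * Real.sqrt ((n + 1) * loglog (n + 1)) ≤ X ω'}).indicator 1 ω := by
          intro n hn
          refine (Set.indicator_of_mem ?_ 1).symm
          show δ * Real.sqrt (((n:ℝ) + 1) * loglog ((n:ℝ) + 1)) ≤ X ω
          rw [← hxdef]
          apply count_lower hδ hx
          have h1 : (n : ℝ) + 1 ≤ (k : ℝ) := by
            have : n + 1 ≤ k := Finset.mem_range.mp hn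
            exact_mod_cast this
          have h2 : (k : ℝ) ≤ y / loglog y :=
            Nat.floor_le (div_nonneg (sq_nonneg _) (loglog_pos _).le)
          rw [← hydef]
          linarith
        calc (k : ℝ≥0∞) = ∑ _n ∈ Finset.range k, 1 := by simp
          _ = ∑ n ∈ Finset.range k,
              ({ω' | δ * Real.sqrt ((n + 1) * loglog (n + 1)) ≤ X ω'}).indicator 1 ω :=
            Finset.sum_congr rfl hstep
          _ ≤ G ω := by simp only [hGdef]; exact ENNReal.sum_le_tsum _
      have hk2 : x ^ 2 / loglog x ≤ δ ^ 2 * K₂ * ((k : ℝ) + 1) :=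
        lower_real hδ hx hK₂0 (key2 hδ hx) (Nat.lt_floor_add_one _).le
      calc ENNReal.ofReal (x ^ 2 / loglog x)
          ≤ ENNReal.ofReal (δ ^ 2 * K₂ * ((k : ℝ) + 1)) := ENNReal.ofReal_le_ofReal hk2
        _ = ENNReal.ofReal (δ ^ 2 * K₂) * ENNReal.ofReal ((k : ℝ) + 1) :=
            ENNReal.ofReal_mul (mul_nonneg (sq_nonneg _) hK₂0)
        _ ≤ ENNReal.ofReal (δ ^ 2 * K₂) * (G ω + 1) := by
            apply mul_le_mul_right
            rw [ENNReal.ofReal_add (Nat.cast_nonneg k) zero_le_one, ENNReal.ofReal_natCast,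
              ENNReal.ofReal_one]
            exact add_le_add_left hk1 1
    calc ∫⁻ ω, ENNReal.ofReal (X ω ^ 2 / loglog (X ω)) ∂P
        ≤ ∫⁻ ω, ENNReal.ofReal (δ ^ 2 * K₂) * (G ω + 1) ∂P := lintegral_mono hpt
      _ = ENNReal.ofReal (δ ^ 2 * K₂) * ∫⁻ ω, (G ω + 1) ∂P :=
          lintegral_const_mul' _ _ ENNReal.ofReal_ne_top
      _ = ENNReal.ofReal (δ ^ 2 * K₂) * ((∫⁻ ω, G ω ∂P) + 1) := by
          rw [lintegral_add_right _ measurable_const, lintegral_one, measure_univ]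
      _ < ⊤ := ENNReal.mul_lt_top ENNReal.ofReal_lt_top
          (ENNReal.add_lt_top.mpr ⟨hfin, ENNReal.one_lt_top⟩)
  · -- integrable → sum finite
    intro hint
    rw [hsum_eq]
    have hIfin : ∫⁻ ω, ENNReal.ofReal (X ω ^ 2 / loglog (X ω)) ∂P < ⊤ := by
      have h := hint.2
      rwa [hasFiniteIntegral_iff_ofReal (Filter.Eventually.of_forall fun ω => hg0 (X ω))] at h
    have hC₂0 : 0 ≤ 1 / δ + K₁ / δ ^ 2 := by positivity
    calc ∫⁻ ω, G ω ∂P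
        ≤ ∫⁻ ω, ENNReal.ofReal
            ((1 + Real.exp 1 / δ) + (1 / δ + K₁ / δ ^ 2) * (X ω ^ 2 / loglog (X ω))) ∂P :=
          lintegral_mono hG_upper
      _ ≤ ∫⁻ ω, (ENNReal.ofReal (1 + Real.exp 1 / δ) + ENNReal.ofReal (1 / δ + K₁ / δ ^ 2)
            * ENNReal.ofReal (X ω ^ 2 / loglog (X ω))) ∂P := by
          apply lintegral_mono
          intro ω
          calc ENNReal.ofReal ((1 + Real.exp 1 / δ)
                + (1 / δ + K₁ / δ ^ 2) * (X ω ^ 2 / loglog (X ω)))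
              ≤ ENNReal.ofReal (1 + Real.exp 1 / δ)
                + ENNReal.ofReal ((1 / δ + K₁ / δ ^ 2) * (X ω ^ 2 / loglog (X ω))) :=
              ENNReal.ofReal_add_le
            _ = _ := by rw [ENNReal.ofReal_mul hC₂0]
      _ = ENNReal.ofReal (1 + Real.exp 1 / δ) + ENNReal.ofReal (1 / δ + K₁ / δ ^ 2)
            * ∫⁻ ω, ENNReal.ofReal (X ω ^ 2 / loglog (X ω)) ∂P := by
          rw [lintegral_add_left measurable_const, lintegral_const, measure_univ, mul_one,
            lintegral_const_mul' _ _ ENNReal.ofReal_ne_top]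
      _ < ⊤ := ENNReal.add_lt_top.mpr ⟨ENNReal.ofReal_lt_top,
          ENNReal.mul_lt_top ENNReal.ofReal_lt_top hIfin⟩
end

section
/- Let X₁,…,X_n be independent random variables on a probability space with EX_i = 0 and X_i ≤ y almost surely for some y > 0, and let B² = ∑_{i=1}^n E X_i². Then for every x > 0, P(max_{k≤n} ∑_{i=1}^k X_i ≥ x) ≤ exp( −x²/(2(xy + B²)) · (1 + (2/3)·ln(1 + xy/B²)) ). -/
open MeasureTheory ProbabilityTheory Real

private lemma nonneg_of_deriv_Ici (f f' : ℝ → ℝ)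
    (hd : ∀ u : ℝ, 0 ≤ u → HasDerivAt f (f' u) u)
    (h0 : f 0 = 0) (h' : ∀ u : ℝ, 0 ≤ u → 0 ≤ f' u) :
    ∀ u : ℝ, 0 ≤ u → 0 ≤ f u := by
  have hmono : MonotoneOn f (Set.Ici 0) := by
    apply monotoneOn_of_deriv_nonneg (convex_Ici 0)
    · exact fun x hx => (hd x hx).continuousAt.continuousWithinAt
    · intro x hx
      rw [interior_Ici] at hx
      exact ((hd x (le_of_lt hx)).differentiableAt).differentiableWithinAt
    · intro x hx
      rw [interior_Ici] at hx
      rw [(hd x (le_of_lt hx)).deriv]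
      exact h' x (le_of_lt hx)
  intro u hu
  have := hmono (Set.self_mem_Ici) (by exact hu) hu
  rwa [h0] at this

private lemma exp_le_quad {u : ℝ} (hu : u ≤ 0) : Real.exp u ≤ 1 + u + u ^ 2 / 2 := by
  have key : ∀ v : ℝ, 0 ≤ v → 0 ≤ 1 + (-v) + (-v) ^ 2 / 2 - Real.exp (-v) := by
    apply nonneg_of_deriv_Ici _ (fun v => -(1 + (-v) - Real.exp (-v)))
    · intro v _
      have h1 : HasDerivAt (fun v : ℝ => Real.exp (-v)) (-Real.exp (-v)) v := by
        simpa using (hasDerivAt_neg v).exp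
      have h2 : HasDerivAt (fun v : ℝ => 1 + (-v) + (-v) ^ 2 / 2) (-1 + v) v := by
        have : HasDerivAt (fun v : ℝ => 1 + (-v) + (-v) ^ 2 / 2) (0 + -1 + (2 * v) / 2) v := by
          apply HasDerivAt.add
          · exact (hasDerivAt_const v 1).add (hasDerivAt_neg v)
          · have := (((hasDerivAt_neg v).fun_pow 2).div_const 2)
            exact this.congr_deriv (by simp only [Nat.cast_ofNat, show (2:ℕ) - 1 = 1 from rfl, pow_one]; ring)
        convert this using 1; ring
      exact (h2.fun_sub h1).congr_deriv (by ring)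
    · simp
    · intro v hv
      have := Real.add_one_le_exp (-v)
      linarith
  have := key (-u) (by linarith)
  simp only [neg_neg] at this
  linarith

private lemma quad_le_exp {s : ℝ} (hs : 0 ≤ s) : 1 + s + s ^ 2 / 2 ≤ Real.exp s := by
  have key : ∀ v : ℝ, 0 ≤ v → 0 ≤ Real.exp v - 1 - v - v ^ 2 / 2 := by
    apply nonneg_of_deriv_Ici _ (fun v => Real.exp v - 1 - v)
    · intro v _
      have hp : HasDerivAt (fun v : ℝ => v ^ 2 / 2) ((↑2 * v ^ 1) / 2) v :=
        (hasDerivAt_pow 2 v).div_const 2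
      have : HasDerivAt (fun v : ℝ => Real.exp v - 1 - v - v ^ 2 / 2)
          (Real.exp v - 0 - 1 - (↑2 * v ^ 1) / 2) v :=
        (((Real.hasDerivAt_exp v).sub (hasDerivAt_const v 1)).sub (hasDerivAt_id v)).sub hp
      convert this using 1; push_cast; ring
    · simp
    · intro v hv
      have := Real.add_one_le_exp v
      linarith
  have := key s hs
  linarith

private lemma G_nonneg : ∀ u : ℝ, 0 ≤ u → 0 ≤ u * Real.exp u - 2 * Real.exp u + u + 2 := by
  have hH : ∀ u : ℝ, 0 ≤ u → 0 ≤ (u - 1) * Real.exp u + 1 := by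
    apply nonneg_of_deriv_Ici _ (fun u => u * Real.exp u)
    · intro u _
      have : HasDerivAt (fun u : ℝ => (u - 1) * Real.exp u + 1)
          ((1 - 0) * Real.exp u + (u - 1) * Real.exp u + 0) u := by
        exact (((hasDerivAt_id u).sub (hasDerivAt_const u 1)).mul (Real.hasDerivAt_exp u)).add
          (hasDerivAt_const u 1)
      convert this using 1; ring
    · simp
    · intro u hu; positivity
  apply nonneg_of_deriv_Ici _ (fun u => (u - 1) * Real.exp u + 1)
  · intro u _
    have : HasDerivAt (fun u : ℝ => u * Real.exp u - 2 * Real.exp u + u + 2)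
        ((1 * Real.exp u + u * Real.exp u - 2 * Real.exp u + 1) + 0) u := by
      apply HasDerivAt.add _ (hasDerivAt_const u 2)
      exact (((hasDerivAt_id u).mul (Real.hasDerivAt_exp u)).sub
        ((Real.hasDerivAt_exp u).const_mul 2)).add (hasDerivAt_id u)
    convert this using 1; ring
  · simp
  · exact hH

private lemma psi_mono {t : ℝ} (ht : 0 ≤ t) :
    MonotoneOn (fun w : ℝ => (Real.exp (t * w) - 1 - t * w) / w ^ 2) (Set.Ioi 0) := by
  have hd : ∀ w : ℝ, 0 < w → HasDerivAt (fun w : ℝ => (Real.exp (t * w) - 1 - t * w) / w ^ 2)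
      (((t * Real.exp (t * w) - 0 - t) * w ^ 2 -
        (Real.exp (t * w) - 1 - t * w) * (↑2 * w ^ 1)) / (w ^ 2) ^ 2) w := by
    intro w hw
    have h1 : HasDerivAt (fun w : ℝ => Real.exp (t * w) - 1 - t * w)
        (t * Real.exp (t * w) - 0 - t) w := by
      have he : HasDerivAt (fun w : ℝ => Real.exp (t * w)) (Real.exp (t * w) * t) w := by
        simpa using ((hasDerivAt_id w).const_mul t).exp
      have : HasDerivAt (fun w : ℝ => Real.exp (t * w) - 1 - t * w)
          (Real.exp (t * w) * t - 0 - t * 1) w :=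
        (he.sub (hasDerivAt_const w 1)).sub ((hasDerivAt_id w).const_mul t)
      convert this using 1; ring
    exact h1.div (hasDerivAt_pow 2 w) (by positivity)
  apply monotoneOn_of_deriv_nonneg (convex_Ioi 0)
  · intro w hw
    exact ((hd w hw).continuousAt.continuousWithinAt)
  · intro w hw
    rw [interior_Ioi] at hw
    exact (hd w hw).differentiableAt.differentiableWithinAt
  · intro w hw
    rw [interior_Ioi] at hw
    rw [(hd w hw).deriv]
    have hG := G_nonneg (t * w) (mul_nonneg ht hw.le)
    have hnum : 0 ≤ (t * Real.exp (t * w) - 0 - t) * w ^ 2 -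
        (Real.exp (t * w) - 1 - t * w) * (↑2 * w ^ 1) := by
      have : (t * Real.exp (t * w) - 0 - t) * w ^ 2 -
          (Real.exp (t * w) - 1 - t * w) * (↑2 * w ^ 1)
          = w * (t * w * Real.exp (t * w) - 2 * Real.exp (t * w) + t * w + 2) := by
        push_cast; ring
      rw [this]; exact mul_nonneg hw.le hG
    exact div_nonneg hnum (by positivity)

private lemma bennett_pointwise {t y z : ℝ} (ht : 0 ≤ t) (hy : 0 < y) (hz : z ≤ y) :
    Real.exp (t * z) ≤ 1 + t * z + z ^ 2 * ((Real.exp (t * y) - 1 - t * y) / y ^ 2) := by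
  rcases le_or_gt z 0 with hz0 | hz0
  · have h1 : Real.exp (t * z) ≤ 1 + t * z + (t * z) ^ 2 / 2 :=
      exp_le_quad (mul_nonpos_of_nonneg_of_nonpos ht hz0)
    have h2 : 1 + t * y + (t * y) ^ 2 / 2 ≤ Real.exp (t * y) := quad_le_exp (by positivity)
    have h3 : (t * z) ^ 2 / 2 ≤ z ^ 2 * ((Real.exp (t * y) - 1 - t * y) / y ^ 2) := by
      have hq : t ^ 2 / 2 ≤ (Real.exp (t * y) - 1 - t * y) / y ^ 2 := by
        rw [div_le_div_iff₀ (by norm_num) (by positivity)]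
        nlinarith
      calc (t * z) ^ 2 / 2 = z ^ 2 * (t ^ 2 / 2) := by ring
      _ ≤ _ := mul_le_mul_of_nonneg_left hq (sq_nonneg z)
    linarith
  · have := psi_mono ht (Set.mem_Ioi.2 hz0) (Set.mem_Ioi.2 hy) hz
    rw [div_le_div_iff₀ (by positivity) (by positivity)] at this
    have hy2 : (0:ℝ) < y ^ 2 := by positivity
    rw [← sub_nonneg]
    have : 0 ≤ ((Real.exp (t*y) - 1 - t*y) * z ^ 2 - (Real.exp (t*z) - 1 - t*z) * y ^ 2) / y ^ 2 := by
      apply div_nonneg _ hy2.le; linarith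
    calc (0:ℝ) ≤ _ := this
    _ = 1 + t * z + z ^ 2 * ((Real.exp (t * y) - 1 - t * y) / y ^ 2) - Real.exp (t * z) := by
        field_simp; ring

private lemma hasDerivAt_log1p {u : ℝ} (hu : 0 ≤ u) :
    HasDerivAt (fun u : ℝ => Real.log (1 + u)) (1 / (1 + u)) u := by
  have h : HasDerivAt (fun u : ℝ => 1 + u) 1 u := (hasDerivAt_id u).const_add 1
  simpa using h.log (by linarith)

private lemma A_nonneg : ∀ u : ℝ, 0 ≤ u →
    0 ≤ 8/3 * Real.log (1 + u) + 2/3 * (1/(1 + u)) - 2/3 := by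
  apply nonneg_of_deriv_Ici _ (fun u => 8/3 * (1/(1+u)) - 2/3 * (1/(1+u)^2))
  · intro u hu
    have h1 : (0:ℝ) < 1 + u := by linarith
    have hinv : HasDerivAt (fun u : ℝ => 1/(1 + u)) (-(1/(1+u)^2)) u := by
      have := ((hasDerivAt_id u).const_add 1).inv h1.ne'
      simp only [id_eq, one_mul] at this
      have heq : (fun u : ℝ => 1/(1 + u)) = (fun u : ℝ => (1 + u)⁻¹) := by
        funext v; rw [one_div]
      rw [heq, show -(1/(1+u)^2) = -1/(1+u)^2 by rw [neg_div]]
      exact this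
    have := (((hasDerivAt_log1p hu).const_mul (8/3:ℝ)).fun_add (hinv.const_mul (2/3:ℝ))).fun_sub
      (hasDerivAt_const u (2/3:ℝ))
    exact this.congr_deriv (by ring)
  · norm_num
  · intro u hu
    have h1 : (0:ℝ) < 1 + u := by linarith
    have ha : 1/(1+u)^2 ≤ 1/(1+u) := by
      rw [div_le_div_iff₀ (by positivity) h1]; nlinarith
    have hb : (0:ℝ) ≤ 1/(1+u) := by positivity
    linarith

private lemma B_nonneg : ∀ u : ℝ, 0 ≤ u →
    0 ≤ (10/3 + 8/3 * u) * Real.log (1 + u) - 10/3 * u := by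
  apply nonneg_of_deriv_Ici _
    (fun u => 8/3 * Real.log (1+u) + (10/3 + 8/3*u) * (1/(1+u)) - 10/3)
  · intro u hu
    have := ((((hasDerivAt_const u (10/3:ℝ)).fun_add ((hasDerivAt_id u).const_mul (8/3:ℝ))).fun_mul
      (hasDerivAt_log1p hu)).fun_sub ((hasDerivAt_id u).const_mul (10/3:ℝ)))
    simp only [id_eq] at this
    exact this.congr_deriv (by ring)
  · norm_num
  · intro u hu
    have h1 : (0:ℝ) < 1 + u := by linarith
    have hA := A_nonneg u hu
    have key : (10/3 + 8/3*u) * (1/(1+u)) = 8/3 + 2/3 * (1/(1+u)) := by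
      field_simp; ring
    rw [key]; linarith

private lemma C_nonneg : ∀ u : ℝ, 0 ≤ u →
    0 ≤ (1 + u) * (2 + 4/3 * u) * Real.log (1 + u) - 2 * u * (1 + u) - u^2/3 := by
  apply nonneg_of_deriv_Ici _
    (fun u => (10/3 + 8/3 * u) * Real.log (1+u) + (1+u) * (2 + 4/3*u) * (1/(1+u))
      - (2 + 4*u) - 2/3 * u)
  · intro u hu
    have hprod : HasDerivAt (fun u : ℝ => (1 + u) * (2 + 4/3 * u))
        (1 * (2 + 4/3 * u) + (1 + u) * (4/3)) u := by
      have := ((hasDerivAt_id u).const_add 1).fun_mul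
        (((hasDerivAt_id u).const_mul (4/3:ℝ)).const_add 2)
      simp only [id_eq] at this
      exact this.congr_deriv (by ring)
    have h2 : HasDerivAt (fun u : ℝ => 2 * u * (1 + u)) (2 * (1 + u) + 2 * u * 1) u := by
      have := ((hasDerivAt_id u).const_mul 2).fun_mul ((hasDerivAt_id u).const_add 1)
      simp only [id_eq] at this
      exact this.congr_deriv (by ring)
    have h3 : HasDerivAt (fun u : ℝ => u^2/3) ((↑2 * u ^ 1)/3) u := (hasDerivAt_pow 2 u).div_const 3
    have := ((hprod.fun_mul (hasDerivAt_log1p hu)).fun_sub h2).fun_sub h3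
    refine this.congr_deriv ?_
    have h1 : (0:ℝ) < 1 + u := by linarith
    field_simp
    ring
  · norm_num
  · intro u hu
    have h1 : (0:ℝ) < 1 + u := by linarith
    have hB := B_nonneg u hu
    have key : (1+u) * (2 + 4/3*u) * (1/(1+u)) = 2 + 4/3 * u := by
      field_simp
    rw [key]; linarith

lemma F_nonneg : ∀ u : ℝ, 0 ≤ u →
    0 ≤ ((1 + u)^2 - u^2/3) * Real.log (1 + u) - u - 3/2 * u^2 := by
  apply nonneg_of_deriv_Ici _
    (fun u => (2 * (1+u) - 2/3 * u) * Real.log (1+u) + ((1+u)^2 - u^2/3) * (1/(1+u))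
      - 1 - 3 * u)
  · intro u hu
    have hpoly : HasDerivAt (fun u : ℝ => (1 + u)^2 - u^2/3)
        (2 * (1+u) - 2/3 * u) u := by
      have ha : HasDerivAt (fun u : ℝ => (1 + u)^2) (↑2 * (1+u)^1 * 1) u :=
        (((hasDerivAt_id u).const_add 1)).pow 2
      have hb : HasDerivAt (fun u : ℝ => u^2/3) ((↑2 * u ^ 1)/3) u :=
        (hasDerivAt_pow 2 u).div_const 3
      have := ha.fun_sub hb
      refine this.congr_deriv ?_; push_cast; ring
    have h3 : HasDerivAt (fun u : ℝ => 3/2 * u^2) (3/2 * (↑2 * u ^ 1)) u :=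
      (hasDerivAt_pow 2 u).const_mul (3/2:ℝ)
    have := ((hpoly.fun_mul (hasDerivAt_log1p hu)).fun_sub (hasDerivAt_id u)).fun_sub h3
    simp only [id_eq] at this
    refine this.congr_deriv ?_
    have h1 : (0:ℝ) < 1 + u := by linarith
    field_simp
  · norm_num
  · intro u hu
    have h1 : (0:ℝ) < 1 + u := by linarith
    have hC := C_nonneg u hu
    have key : (2 * (1+u) - 2/3 * u) * Real.log (1+u) + ((1+u)^2 - u^2/3) * (1/(1+u)) - 1 - 3*u
        = ((1 + u) * (2 + 4/3 * u) * Real.log (1 + u) - 2 * u * (1 + u) - u^2/3) / (1+u) := by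
      field_simp; ring
    rw [key]
    exact div_nonneg hC h1.le

private lemma integrable_of_le_const {Ω : Type*} [MeasurableSpace Ω] (P : Measure Ω)
    [IsProbabilityMeasure P] (f : Ω → ℝ) (hf : Measurable f) (C : ℝ)
    (h0 : ∀ ω, 0 ≤ f ω) (hC : ∀ᵐ ω ∂P, f ω ≤ C) : Integrable f P := by
  refine Integrable.mono' (integrable_const C) hf.aestronglyMeasurable ?_
  filter_upwards [hC] with ω h
  rw [Real.norm_eq_abs, abs_of_nonneg (h0 ω)]; exact h

private lemma maximal_bound {Ω : Type*} [MeasurableSpace Ω]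
    (P : Measure Ω) [IsProbabilityMeasure P]
    (n : ℕ) (X : ℕ → Ω → ℝ) (hmeas : ∀ i, Measurable (X i))
    (hind : iIndepFun X P)
    (hXint : ∀ i, Integrable (X i) P)
    (hmean : ∀ i, ∫ ω, X i ω ∂P = 0)
    (y : ℝ) (hy : 0 < y) (hbdd : ∀ i, ∀ᵐ ω ∂P, X i ω ≤ y)
    (t : ℝ) (ht : 0 ≤ t) (x : ℝ) (hx : 0 < x) :
    Real.exp (t * x) * (P {ω | ∃ k ≤ n, x ≤ ∑ i ∈ Finset.range k, X i ω}).toReal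
      ≤ ∫ ω, Real.exp (t * ∑ i ∈ Finset.range n, X i ω) ∂P := by
  classical
  set S : ℕ → Ω → ℝ := fun k ω => ∑ i ∈ Finset.range k, X i ω with hS
  have hSmeas : ∀ k, Measurable (S k) := fun k => Finset.measurable_sum _ (fun i _ => hmeas i)
  have hbdd' : ∀ᵐ ω ∂P, ∀ i, X i ω ≤ y := (MeasureTheory.ae_all_iff).2 hbdd
  have hInt : ∀ s : Finset ℕ, Integrable (fun ω => Real.exp (t * ∑ i ∈ s, X i ω)) P := by
    intro s
    apply integrable_of_le_const P _ ((Finset.measurable_sum s fun i _ => hmeas i).const_mul t).exp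
      (Real.exp (t * (s.card * y))) (fun ω => (Real.exp_pos _).le)
    filter_upwards [hbdd'] with ω h
    apply Real.exp_le_exp.2
    apply mul_le_mul_of_nonneg_left _ ht
    calc ∑ i ∈ s, X i ω ≤ ∑ i ∈ s, y := Finset.sum_le_sum (fun i _ => h i)
    _ = s.card * y := by rw [Finset.sum_const, nsmul_eq_mul]
  set Ak : ℕ → Set Ω := fun k =>
    {ω | x ≤ S k ω} ∩ ⋂ j ∈ Finset.range k, {ω | S j ω < x} with hAk
  have hAkm : ∀ k, MeasurableSet (Ak k) := fun k =>
    (measurableSet_le measurable_const (hSmeas k)).inter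
      (Finset.measurableSet_biInter _ fun j _ => measurableSet_lt (hSmeas j) measurable_const)
  have hmemAk : ∀ k ω, ω ∈ Ak k ↔ (x ≤ S k ω ∧ ∀ j < k, S j ω < x) := by
    intro k ω
    simp [hAk, Set.mem_iInter, Finset.mem_range]
  have hA : {ω | ∃ k ≤ n, x ≤ S k ω} = ⋃ k ∈ Finset.Icc 1 n, Ak k := by
    ext ω
    simp only [Set.mem_setOf_eq, Set.mem_iUnion, Finset.mem_Icc]
    constructor
    · rintro ⟨k, hk, hxk⟩
      have hex : ∃ m, x ≤ S m ω := ⟨k, hxk⟩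
      refine ⟨Nat.find hex, ⟨?_, le_trans (Nat.find_min' hex hxk) hk⟩, ?_⟩
      · by_contra h
        push_neg at h
        interval_cases h' : (Nat.find hex)
        · have := Nat.find_spec hex
          rw [h'] at this
          simp only [hS] at this
          simp at this
          linarith
      · rw [hmemAk]
        exact ⟨Nat.find_spec hex, fun j hj => lt_of_not_ge (Nat.find_min hex hj)⟩
    · rintro ⟨k, ⟨hk1, hkn⟩, hω⟩
      exact ⟨k, hkn, ((hmemAk k ω).1 hω).1⟩
  have hdisj0 : ∀ a b : ℕ, a < b → Disjoint (Ak a) (Ak b) := by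
    intro a b hlt
    rw [Set.disjoint_left]
    intro ω hωa hωb
    have h1 := ((hmemAk a ω).1 hωa).1
    have h2 := ((hmemAk b ω).1 hωb).2 a hlt
    linarith
  have hdisj : (↑(Finset.Icc 1 n) : Set ℕ).PairwiseDisjoint Ak := by
    intro a _ b _ hab
    rcases lt_or_gt_of_ne hab with h | h
    · exact hdisj0 a b h
    · exact (hdisj0 b a h).symm
  -- per k bound
  have hkey : ∀ k ∈ Finset.Icc 1 n,
      Real.exp (t * x) * (P (Ak k)).toReal ≤ ∫ ω in Ak k, Real.exp (t * S n ω) ∂P := by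
    intro k hk
    rw [Finset.mem_Icc] at hk
    obtain ⟨hk1, hkn⟩ := hk
    have step1 : Real.exp (t * x) * (P (Ak k)).toReal ≤ ∫ ω in Ak k, Real.exp (t * S k ω) ∂P := by
      apply setIntegral_ge_of_const_le_real (hAkm k) (measure_ne_top P _)
      · intro ω hω
        exact Real.exp_le_exp.2 (mul_le_mul_of_nonneg_left ((hmemAk k ω).1 hω).1 ht)
      · exact (hInt (Finset.range k)).integrableOn
    -- independence setup
    set W : Ω → ℝ := fun ω => ∑ i ∈ Finset.Ico k n, X i ω with hW
    set Tset : Set (↥(Finset.range k) → ℝ) :=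
      {v | x ≤ ∑ i, v i} ∩ ⋂ j ∈ Finset.range k,
        {v | (∑ i ∈ Finset.univ.filter (fun i : ↥(Finset.range k) => (i : ℕ) < j), v i) < x}
      with hTset
    have hTm : MeasurableSet Tset := by
      apply MeasurableSet.inter
      · exact measurableSet_le measurable_const
          (Finset.measurable_sum _ fun i _ => measurable_pi_apply i)
      · exact Finset.measurableSet_biInter _ fun j _ =>
          measurableSet_lt (Finset.measurable_sum _ fun i _ => measurable_pi_apply i)
            measurable_const
    -- key sum identities
    have hsumk : ∀ ω, (∑ i : ↥(Finset.range k), X (i : ℕ) ω) = S k ω := by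
      intro ω
      rw [hS]
      exact Finset.sum_coe_sort (Finset.range k) (fun i => X i ω)
    have hsumj : ∀ (j : ℕ), j ≤ k → ∀ ω,
        (∑ i ∈ Finset.univ.filter (fun i : ↥(Finset.range k) => (i : ℕ) < j), X (i : ℕ) ω)
          = S j ω := by
      intro j hj ω
      rw [Finset.sum_filter]
      rw [Finset.univ_eq_attach]
      rw [Finset.sum_attach (Finset.range k) (fun i => if i < j then X i ω else 0)]
      rw [← Finset.sum_filter]
      congr 1
      ext i
      simp only [Finset.mem_filter, Finset.mem_range]
      omega
    have hmemT : ∀ ω, ((fun (i : ↥(Finset.range k)) => X (i : ℕ) ω) ∈ Tset) ↔ ω ∈ Ak k := by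
      intro ω
      rw [hmemAk, hTset]
      simp only [Set.mem_inter_iff, Set.mem_setOf_eq, Set.mem_iInter, Finset.mem_range]
      rw [hsumk ω]
      constructor
      · rintro ⟨h1, h2⟩
        refine ⟨h1, fun j hj => ?_⟩
        have := h2 j hj
        rwa [hsumj j (le_of_lt hj) ω] at this
      · rintro ⟨h1, h2⟩
        refine ⟨h1, fun j hj => ?_⟩
        rw [hsumj j (le_of_lt hj) ω]
        exact h2 j hj
    -- the two independent functions
    have hφm : Measurable (fun v : ↥(Finset.range k) → ℝ =>
        Set.indicator Tset (fun v => Real.exp (t * ∑ i, v i)) v) := by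
      exact (((Finset.measurable_sum _ fun i _ => measurable_pi_apply i).const_mul t).exp).indicator hTm
    have hψm : Measurable (fun w : ↥(Finset.Ico k n) → ℝ => Real.exp (t * ∑ i, w i)) :=
      ((Finset.measurable_sum _ fun i _ => measurable_pi_apply i).const_mul t).exp
    have hbase := hind.indepFun_finset (Finset.range k) (Finset.Ico k n)
      (by simp [Finset.disjoint_left]; omega) hmeas
    have hindep : IndepFun
        (Set.indicator (Ak k) (fun ω => Real.exp (t * S k ω)))
        (fun ω => Real.exp (t * W ω)) P := by
      have hcomp := hbase.comp hφm hψm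
      have heq1 : ((fun v : ↥(Finset.range k) → ℝ =>
          Set.indicator Tset (fun v => Real.exp (t * ∑ i, v i)) v)
          ∘ (fun ω (i : ↥(Finset.range k)) => X (i : ℕ) ω))
          = Set.indicator (Ak k) (fun ω => Real.exp (t * S k ω)) := by
        funext ω
        simp only [Function.comp_apply]
        rw [Set.indicator_apply, Set.indicator_apply]
        rw [if_congr (by rw [hmemT ω]) (by rw [hsumk ω]) rfl]
      have heq2 : ((fun w : ↥(Finset.Ico k n) → ℝ => Real.exp (t * ∑ i, w i))
          ∘ (fun ω (i : ↥(Finset.Ico k n)) => X (i : ℕ) ω))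
          = (fun ω => Real.exp (t * W ω)) := by
        funext ω
        simp only [Function.comp_apply, hW]
        rw [Finset.sum_coe_sort (Finset.Ico k n) (fun i => X i ω)]
      rw [← heq1, ← heq2]
      exact hcomp
    -- integrability
    have hSbddk : ∀ᵐ ω ∂P, Real.exp (t * S k ω) ≤ Real.exp (t * (k * y)) := by
      filter_upwards [hbdd'] with ω h
      apply Real.exp_le_exp.2
      apply mul_le_mul_of_nonneg_left _ ht
      rw [hS]
      calc ∑ i ∈ Finset.range k, X i ω ≤ ∑ i ∈ Finset.range k, y :=
        Finset.sum_le_sum (fun i _ => h i)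
      _ = k * y := by rw [Finset.sum_const, nsmul_eq_mul, Finset.card_range]
    have h1int : Integrable (Set.indicator (Ak k) (fun ω => Real.exp (t * S k ω))) P := by
      apply integrable_of_le_const P _ (((hSmeas k).const_mul t).exp.indicator (hAkm k))
        (Real.exp (t * (k * y)))
      · intro ω
        exact Set.indicator_nonneg (fun ω _ => (Real.exp_pos _).le) ω
      · filter_upwards [hSbddk] with ω h
        rw [Set.indicator_apply]
        split
        · exact h
        · exact (Real.exp_pos _).le
    have h2int : Integrable (fun ω => Real.exp (t * W ω)) P := hInt (Finset.Ico k n)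
    have hmul := hindep.integral_fun_mul_eq_mul_integral h1int.aestronglyMeasurable h2int.aestronglyMeasurable
    -- 1 ≤ ∫ exp (t W)
    have hWint : Integrable W P := integrable_finset_sum _ (fun i _ => hXint i)
    have hone : 1 ≤ ∫ ω, Real.exp (t * W ω) ∂P := by
      have hle : ∀ ω, 1 + t * W ω ≤ Real.exp (t * W ω) := by
        intro ω
        have := Real.add_one_le_exp (t * W ω)
        linarith
      have hint1 : Integrable (fun ω => 1 + t * W ω) P :=
        (integrable_const 1).add (hWint.const_mul t)
      have : ∫ ω, (1 + t * W ω) ∂P ≤ ∫ ω, Real.exp (t * W ω) ∂P :=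
        integral_mono hint1 h2int hle
      have hWzero : ∫ ω, W ω ∂P = 0 := by
        rw [hW]
        rw [integral_finset_sum _ (fun i _ => hXint i)]
        exact Finset.sum_eq_zero (fun i _ => hmean i)
      rw [integral_add (integrable_const 1) (hWint.const_mul t), integral_const,
        integral_const_mul, hWzero] at this
      simpa using this
    -- pointwise product identity
    have hptwise : ∀ ω, Set.indicator (Ak k) (fun ω => Real.exp (t * S k ω)) ω
        * Real.exp (t * W ω)
        = Set.indicator (Ak k) (fun ω => Real.exp (t * S n ω)) ω := by
      intro ω
      rw [Set.indicator_apply, Set.indicator_apply]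
      split
      · rw [← Real.exp_add, ← mul_add]
        congr 2
        rw [hS, hW]
        exact Finset.sum_range_add_sum_Ico (fun i => X i ω) hkn
      · rw [zero_mul]
    have hnn : 0 ≤ ∫ ω, Set.indicator (Ak k) (fun ω => Real.exp (t * S k ω)) ω ∂P :=
      integral_nonneg (fun ω => Set.indicator_nonneg (fun ω _ => (Real.exp_pos _).le) ω)
    calc Real.exp (t * x) * (P (Ak k)).toReal
        ≤ ∫ ω in Ak k, Real.exp (t * S k ω) ∂P := step1
      _ = ∫ ω, Set.indicator (Ak k) (fun ω => Real.exp (t * S k ω)) ω ∂P :=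
          (integral_indicator (hAkm k)).symm
      _ ≤ (∫ ω, Set.indicator (Ak k) (fun ω => Real.exp (t * S k ω)) ω ∂P)
          * ∫ ω, Real.exp (t * W ω) ∂P := le_mul_of_one_le_right hnn hone
      _ = ∫ ω, Set.indicator (Ak k) (fun ω => Real.exp (t * S k ω)) ω
          * Real.exp (t * W ω) ∂P := hmul.symm
      _ = ∫ ω, Set.indicator (Ak k) (fun ω => Real.exp (t * S n ω)) ω ∂P := by
          congr 1
          funext ω
          exact hptwise ω
      _ = ∫ ω in Ak k, Real.exp (t * S n ω) ∂P := integral_indicator (hAkm k)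
  -- combine
  show Real.exp (t * x) * (P {ω | ∃ k ≤ n, x ≤ S k ω}).toReal ≤ ∫ ω, Real.exp (t * S n ω) ∂P
  rw [hA, measure_biUnion_finset hdisj (fun k _ => hAkm k),
    ENNReal.toReal_sum (fun k _ => measure_ne_top P _), Finset.mul_sum]
  calc ∑ k ∈ Finset.Icc 1 n, Real.exp (t * x) * (P (Ak k)).toReal
      ≤ ∑ k ∈ Finset.Icc 1 n, ∫ ω in Ak k, Real.exp (t * S n ω) ∂P :=
        Finset.sum_le_sum hkey
    _ = ∫ ω in ⋃ k ∈ Finset.Icc 1 n, Ak k, Real.exp (t * S n ω) ∂P :=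
        (integral_biUnion_finset _ (fun k _ => hAkm k) hdisj
          (fun k _ => (hInt (Finset.range n)).integrableOn)).symm
    _ ≤ ∫ ω, Real.exp (t * S n ω) ∂P :=
        setIntegral_le_integral (hInt (Finset.range n))
          (Filter.Eventually.of_forall fun ω => (Real.exp_pos _).le)

theorem bennett_maximal_inequality {Ω : Type*} [MeasurableSpace Ω]
    (P : Measure Ω) [IsProbabilityMeasure P]
    (n : ℕ) (X : ℕ → Ω → ℝ) (hmeas : ∀ i, Measurable (X i))
    (hind : iIndepFun X P)
    (hL2 : ∀ i, MemLp (X i) 2 P)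
    (hmean : ∀ i, ∫ ω, X i ω ∂P = 0)
    (y : ℝ) (hy : 0 < y) (hbdd : ∀ i, ∀ᵐ ω ∂P, X i ω ≤ y)
    (B2 : ℝ) (hB2 : B2 = ∑ i ∈ Finset.range n, ∫ ω, (X i ω) ^ 2 ∂P) :
    ∀ x : ℝ, 0 < x →
      P {ω | ∃ k ≤ n, x ≤ ∑ i ∈ Finset.range k, X i ω} ≤
        ENNReal.ofReal (Real.exp (-(x ^ 2 / (2 * (x * y + B2))) *
          (1 + 2 / 3 * Real.log (1 + x * y / B2)))) := by
  intro x hx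
  have hB2nn : 0 ≤ B2 := by
    rw [hB2]; exact Finset.sum_nonneg fun i _ => integral_nonneg fun ω => sq_nonneg _
  rcases eq_or_lt_of_le hB2nn with hB0 | hB2pos
  · -- degenerate case B2 = 0 : all variables vanish a.e.
    have hsum0 : ∑ i ∈ Finset.range n, ∫ ω, (X i ω) ^ 2 ∂P = 0 := by rw [← hB2, ← hB0]
    have hz : ∀ i ∈ Finset.range n, ∀ᵐ ω ∂P, X i ω = 0 := by
      intro i hi
      have hzero : ∫ ω, (X i ω) ^ 2 ∂P = 0 :=
        (Finset.sum_eq_zero_iff_of_nonneg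
          (fun j _ => integral_nonneg fun ω => sq_nonneg _)).1 hsum0 i hi
      have := (integral_eq_zero_iff_of_nonneg_ae
        (Filter.Eventually.of_forall fun ω => sq_nonneg (X i ω))
        (hL2 i).integrable_sq).1 hzero
      filter_upwards [this] with ω h
      exact pow_eq_zero_iff (two_ne_zero) |>.1 h
    have hall : ∀ᵐ ω ∂P, ∀ i ∈ Finset.range n, X i ω = 0 :=
      (ae_ball_iff (Finset.range n).countable_toSet).2 hz
    have hnull : P {ω | ∃ k ≤ n, x ≤ ∑ i ∈ Finset.range k, X i ω} = 0 := by
      apply measure_mono_null _ (ae_iff.1 hall)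
      intro ω hω
      simp only [Set.mem_setOf_eq]
      intro hallω
      obtain ⟨k, hk, hxk⟩ := hω
      have hzk : (∑ i ∈ Finset.range k, X i ω) = 0 :=
        Finset.sum_eq_zero fun i hi =>
          hallω i (Finset.mem_range.2 (lt_of_lt_of_le (Finset.mem_range.1 hi) hk))
      rw [hzk] at hxk
      linarith
    rw [hnull]
    exact bot_le
  · -- main case
    have hB2pos' : (0:ℝ) < B2 := hB2pos
    set u := x * y / B2 with hu_def
    have hu : 0 < u := div_pos (mul_pos hx hy) hB2pos'
    have h1u : (0:ℝ) < 1 + u := by linarith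
    set Lg := Real.log (1 + u) with hLg_def
    have hLgnn : 0 ≤ Lg := Real.log_nonneg (by linarith)
    set t := Lg / y with ht_def
    have ht : 0 ≤ t := div_nonneg hLgnn hy.le
    have hty : t * y = Lg := by rw [ht_def]; field_simp
    have hexpty : Real.exp (t * y) = 1 + u := by rw [hty, hLg_def, Real.exp_log h1u]
    set g := (Real.exp (t * y) - 1 - t * y) / y ^ 2 with hg_def
    have hgnn : 0 ≤ g := by
      apply div_nonneg _ (sq_nonneg y)
      have := Real.add_one_le_exp (t * y); linarith
    have hXint : ∀ i, Integrable (X i) P := fun i => (hL2 i).integrable one_le_two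
    have hmax := maximal_bound P n X hmeas hind hXint hmean y hy hbdd t ht x hx
    have hvar_bound : ∀ i, mgf (X i) P t ≤ Real.exp ((∫ ω, (X i ω) ^ 2 ∂P) * g) := by
      intro i
      have hint_exp : Integrable (fun ω => Real.exp (t * X i ω)) P := by
        apply integrable_of_le_const P _ (((hmeas i).const_mul t).exp) (Real.exp (t * y))
          (fun ω => (Real.exp_pos _).le)
        filter_upwards [hbdd i] with ω h
        exact Real.exp_le_exp.2 (mul_le_mul_of_nonneg_left h ht)
      have hrhs_int : Integrable (fun ω => 1 + t * X i ω + (X i ω) ^ 2 * g) P :=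
        ((integrable_const 1).add ((hXint i).const_mul t)).add
          ((hL2 i).integrable_sq.mul_const g)
      have hptw : ∀ᵐ ω ∂P, Real.exp (t * X i ω) ≤ 1 + t * X i ω + (X i ω) ^ 2 * g := by
        filter_upwards [hbdd i] with ω h
        rw [hg_def]
        exact bennett_pointwise ht hy h
      have h1 : mgf (X i) P t ≤ ∫ ω, (1 + t * X i ω + (X i ω) ^ 2 * g) ∂P := by
        rw [mgf]
        exact integral_mono_ae hint_exp hrhs_int hptw
      have hA1 : Integrable (fun ω => 1 + t * X i ω) P := by
        have h := (integrable_const (1:ℝ)).add ((hXint i).const_mul t)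
        exact h
      have h2 : ∫ ω, (1 + t * X i ω + (X i ω) ^ 2 * g) ∂P
          = 1 + (∫ ω, (X i ω) ^ 2 ∂P) * g := by
        rw [integral_add hA1 ((hL2 i).integrable_sq.mul_const g),
          integral_add (integrable_const 1) ((hXint i).const_mul t),
          integral_const, integral_const_mul, hmean i, integral_mul_const]
        simp
      have h3 := Real.add_one_le_exp ((∫ ω, (X i ω) ^ 2 ∂P) * g)
      rw [h2] at h1
      linarith
    have hmgf_total : ∫ ω, Real.exp (t * ∑ i ∈ Finset.range n, X i ω) ∂P
        ≤ Real.exp (B2 * g) := by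
      have heq : ∫ ω, Real.exp (t * ∑ i ∈ Finset.range n, X i ω) ∂P
          = mgf (∑ i ∈ Finset.range n, X i) P t := by
        simp only [mgf, Finset.sum_apply]
      rw [heq, hind.mgf_sum hmeas]
      calc ∏ i ∈ Finset.range n, mgf (X i) P t
          ≤ ∏ i ∈ Finset.range n, Real.exp ((∫ ω, (X i ω) ^ 2 ∂P) * g) :=
            Finset.prod_le_prod (fun i _ => mgf_nonneg) (fun i _ => hvar_bound i)
        _ = Real.exp (∑ i ∈ Finset.range n, (∫ ω, (X i ω) ^ 2 ∂P) * g) :=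
            (Real.exp_sum _ _).symm
        _ = Real.exp (B2 * g) := by rw [← Finset.sum_mul, ← hB2]
    have hstep : (P {ω | ∃ k ≤ n, x ≤ ∑ i ∈ Finset.range k, X i ω}).toReal
        ≤ Real.exp (B2 * g - t * x) := by
      rw [Real.exp_sub, le_div_iff₀ (Real.exp_pos _)]
      calc (P {ω | ∃ k ≤ n, x ≤ ∑ i ∈ Finset.range k, X i ω}).toReal * Real.exp (t * x)
          = Real.exp (t * x) * (P {ω | ∃ k ≤ n, x ≤ ∑ i ∈ Finset.range k, X i ω}).toReal :=
            mul_comm _ _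
        _ ≤ _ := le_trans hmax hmgf_total
    have hxyB : (0:ℝ) < x * y + B2 := by positivity
    have hxu : x = u * B2 / y := by rw [hu_def]; field_simp
    have hexp_le : B2 * g - t * x ≤ -(x ^ 2 / (2 * (x * y + B2))) * (1 + 2 / 3 * Lg) := by
      have hF := F_nonneg u hu.le
      rw [← hLg_def] at hF
      have hg_eq : g = (u - Lg) / y ^ 2 := by rw [hg_def, hexpty, hty]; ring
      have hLHS : B2 * g - t * x = (B2 / y ^ 2) * (u - Lg - u * Lg) := by
        rw [hg_eq, ht_def, hxu]
        field_simp
      have hRHS : -(x ^ 2 / (2 * (x * y + B2))) * (1 + 2 / 3 * Lg)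
          = (B2 / y ^ 2) * (-(u ^ 2 / (2 * (1 + u))) * (1 + 2 / 3 * Lg)) := by
        rw [hxu]
        have hden : u * B2 / y * y + B2 = B2 * (1 + u) := by field_simp; ring
        rw [hden]
        field_simp
      rw [hLHS, hRHS]
      apply mul_le_mul_of_nonneg_left _ (by positivity)
      rw [← sub_nonneg]
      have key : -(u ^ 2 / (2 * (1 + u))) * (1 + 2 / 3 * Lg) - (u - Lg - u * Lg)
          = (((1 + u) ^ 2 - u ^ 2 / 3) * Lg - u - 3 / 2 * u ^ 2) / (1 + u) := by
        field_simp
        ring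
      rw [key]
      exact div_nonneg hF h1u.le
    calc P {ω | ∃ k ≤ n, x ≤ ∑ i ∈ Finset.range k, X i ω}
        = ENNReal.ofReal ((P {ω | ∃ k ≤ n, x ≤ ∑ i ∈ Finset.range k, X i ω}).toReal) :=
          (ENNReal.ofReal_toReal (measure_ne_top P _)).symm
      _ ≤ ENNReal.ofReal (Real.exp (-(x ^ 2 / (2 * (x * y + B2))) * (1 + 2 / 3 * Lg))) :=
          ENNReal.ofReal_le_ofReal
            (le_trans hstep (Real.exp_le_exp.2 hexp_le))
end

section
/- Let X₁,…,X_n be independent centered random variables on a probability space, p ≥ 2, B² = ∑ E X_i², S_k = ∑_{i≤k} X_i. Then for every x > 0 and 0 < δ ≤ 1 there is a constant C_p depending only on p such that P(max_{k≤n} S_k ≥ x) ≤ C_p δ^{−p} x^{−p} ∑_{i=1}^n E[(X_i⁺)^p] + exp(−x²/(2(1+δ)B²)). -/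
open MeasureTheory ProbabilityTheory Finset

namespace FukAux


lemma exp_quad_of_nonpos {z : ℝ} (hz : z ≤ 0) : Real.exp z ≤ 1 + z + z ^ 2 / 2 := by
  have hmono : MonotoneOn (fun w : ℝ => Real.exp w - (1 + w + w ^ 2 / 2)) (Set.Iic 0) := by
    have hder : ∀ w : ℝ, HasDerivAt (fun w : ℝ => Real.exp w - (1 + w + w ^ 2 / 2))
        (Real.exp w - (1 + w)) w := by
      intro w
      have h1 : HasDerivAt (fun w : ℝ => 1 + w + w ^ 2 / 2) (1 + w) w := by
        have h := ((hasDerivAt_id w).const_add 1).add ((hasDerivAt_pow 2 w).div_const 2)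
        exact h.congr_deriv (by push_cast; ring)
      exact (Real.hasDerivAt_exp w).sub h1
    apply monotoneOn_of_deriv_nonneg (convex_Iic 0)
    · exact (Real.continuous_exp.sub (by continuity)).continuousOn
    · intro w _
      exact (hder w).differentiableAt.differentiableWithinAt
    · intro w _
      rw [(hder w).deriv]
      have := Real.add_one_le_exp w
      linarith
  have := hmono hz (Set.mem_Iic.2 le_rfl) hz
  simp only [Real.exp_zero] at this
  nlinarith [this]

lemma exp_small {u δ : ℝ} (h0 : 0 ≤ u) (hu : u ≤ δ / 2) (hδ1 : δ ≤ 1) :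
    Real.exp u ≤ 1 + u + (1 + δ / 2) * u ^ 2 / 2 := by
  have h1 : u ≤ 1 := by linarith
  have := Real.exp_bound' h0 h1 (n := 3) (by norm_num)
  have hsum : (∑ m ∈ Finset.range 3, u ^ m / m.factorial) = 1 + u + u ^ 2 / 2 := by
    simp [Finset.sum_range_succ]
  rw [hsum] at this
  have h3 : u ^ 3 * ((3:ℕ) + 1 : ℝ) / ((Nat.factorial 3 : ℝ) * (3:ℕ)) = u ^ 3 * (2 / 9) := by
    simp [Nat.factorial]
    ring
  rw [h3] at this
  nlinarith [sq_nonneg u]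

lemma exp_le_one_add_two_mul {r : ℝ} (h0 : 0 ≤ r) (h1 : r ≤ 1) :
    Real.exp r ≤ 1 + 2 * r := by
  have := Real.exp_bound' h0 h1 (n := 2) (by norm_num)
  have hsum : (∑ m ∈ Finset.range 2, r ^ m / m.factorial) = 1 + r := by
    simp [Finset.sum_range_succ]
  rw [hsum] at this
  have h2 : r ^ 2 * ((2:ℕ) + 1 : ℝ) / ((Nat.factorial 2 : ℝ) * (2:ℕ)) = r ^ 2 * (3 / 4) := by
    simp [Nat.factorial]
    ring
  rw [h2] at this
  nlinarith [sq_nonneg r]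

lemma rpow_le_exp {v q : ℝ} (hv : 0 < v) (hq : 0 < q) :
    v ^ q ≤ q ^ q * Real.exp v := by
  rw [Real.rpow_def_of_pos hv, Real.rpow_def_of_pos hq, ← Real.exp_add]
  apply Real.exp_le_exp.2
  have hlog := Real.log_le_sub_one_of_pos (x := v / q) (by positivity)
  rw [Real.log_div (ne_of_gt hv) (ne_of_gt hq)] at hlog
  have : Real.log v ≤ Real.log q + v / q - 1 := by linarith
  have hv2 : q * (v / q) = v := by field_simp
  calc Real.log v * q = q * Real.log v := by ring
    _ ≤ q * (Real.log q + v / q - 1) := mul_le_mul_of_nonneg_left this hq.le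
    _ ≤ Real.log q * q + v := by nlinarith

lemma exp_half_le_two : Real.exp (1 / 2 : ℝ) ≤ 2 := by
  have h := Real.exp_one_lt_d9
  have h2 : Real.exp (1 / 2 : ℝ) * Real.exp (1 / 2 : ℝ) = Real.exp 1 := by
    rw [← Real.exp_add]; norm_num
  nlinarith [Real.exp_pos (1 / 2 : ℝ)]

lemma key_pointwise {p t y δ z : ℝ} (hp : 2 ≤ p) (ht : 0 < t) (hy : 0 < y)
    (hδ : 0 < δ) (hδ1 : δ ≤ 1) (hz : z ≤ y) :
    Real.exp (t * z) ≤ 1 + t * z + (1 + δ / 2) * (t * z) ^ 2 / 2 +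
      Real.exp (t * y) * (2 * t / δ) ^ p * max z 0 ^ p := by
  have hp0 : (0:ℝ) ≤ p := by linarith
  have hpterm : 0 ≤ Real.exp (t * y) * (2 * t / δ) ^ p * max z 0 ^ p := by
    have h1 : (0:ℝ) ≤ (2 * t / δ) ^ p := Real.rpow_nonneg (by positivity) _
    have h2 : (0:ℝ) ≤ max z 0 ^ p := Real.rpow_nonneg (le_max_right _ _) _
    positivity
  rcases le_or_gt z 0 with hz0 | hz0
  · -- z ≤ 0
    have := exp_quad_of_nonpos (z := t * z) (mul_nonpos_of_nonneg_of_nonpos ht.le hz0)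
    have hsq : (t * z) ^ 2 / 2 ≤ (1 + δ / 2) * (t * z) ^ 2 / 2 := by nlinarith [sq_nonneg (t*z)]
    linarith
  · rcases le_or_gt (t * z) (δ / 2) with hsmall | hbig
    · have := exp_small (u := t * z) (by positivity) hsmall hδ1
      linarith
    · -- t*z > δ/2
      have hmaxz : max z 0 = z := max_eq_left hz0.le
      have h1 : Real.exp (t * z) ≤ Real.exp (t * y) :=
        Real.exp_le_exp.2 (mul_le_mul_of_nonneg_left hz ht.le)
      have hbase : (1:ℝ) ≤ 2 * t * z / δ := by
        rw [le_div_iff₀ hδ]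
        nlinarith
      have h2 : (1:ℝ) ≤ (2 * t * z / δ) ^ p :=
        Real.one_le_rpow hbase hp0
      have h3 : (2 * t / δ) ^ p * z ^ p = (2 * t * z / δ) ^ p := by
        rw [← Real.mul_rpow (by positivity) hz0.le]
        ring_nf
      have h4 : Real.exp (t * z) ≤ Real.exp (t * y) * (2 * t / δ) ^ p * max z 0 ^ p := by
        rw [hmaxz, mul_assoc, h3]
        calc Real.exp (t * z) = Real.exp (t * z) * 1 := by ring
          _ ≤ Real.exp (t * y) * (2 * t * z / δ) ^ p :=
              mul_le_mul h1 h2 zero_le_one (Real.exp_pos _).le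
      have h5 : 0 ≤ 1 + t * z + (1 + δ / 2) * (t * z) ^ 2 / 2 := by nlinarith [sq_nonneg (t*z)]
      linarith




lemma integrable_min_const {Ω : Type} [MeasurableSpace Ω] {P : Measure Ω}
    {X : Ω → ℝ} (hX : Measurable X) (hint : Integrable X P) (y : ℝ)
    [IsFiniteMeasure P] :
    Integrable (fun ω => min (X ω) y) P := by
  apply Integrable.mono' (hint.abs.add (integrable_const |y|))
    ((hX.min measurable_const).aestronglyMeasurable)
  filter_upwards with ω
  simp only [Pi.add_apply]
  rw [Real.norm_eq_abs]
  rcases min_cases (X ω) y with ⟨h1, _⟩ | ⟨h1, _⟩ <;> rw [h1]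
  · have : (0:ℝ) ≤ |y| := abs_nonneg y
    linarith [le_abs_self (X ω), neg_abs_le (X ω)]
  · have : (0:ℝ) ≤ |X ω| := abs_nonneg _
    linarith [le_abs_self y, neg_abs_le y]

lemma integrable_exp_min {Ω : Type} [MeasurableSpace Ω] {P : Measure Ω}
    {X : Ω → ℝ} (hX : Measurable X) {t y : ℝ} (ht : 0 < t) [IsFiniteMeasure P] :
    Integrable (fun ω => Real.exp (t * min (X ω) y)) P := by
  apply Integrable.mono' (integrable_const (Real.exp (t * y)))
    (((hX.min measurable_const).const_mul t).exp.aestronglyMeasurable)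
  filter_upwards with ω
  rw [Real.norm_eq_abs, abs_of_pos (Real.exp_pos _)]
  exact Real.exp_le_exp.2 (mul_le_mul_of_nonneg_left (min_le_right _ _) ht.le)

lemma mgf_min_le {Ω : Type} [MeasurableSpace Ω] (P : Measure Ω) [IsProbabilityMeasure P]
    {X : Ω → ℝ} (hX : Measurable X) {p t y δ : ℝ} (hp : 2 ≤ p) (ht : 0 < t) (hy : 0 < y)
    (hδ : 0 < δ) (hδ1 : δ ≤ 1)
    (hint1 : Integrable X P) (hmean : ∫ ω, X ω ∂P = 0)
    (hint2 : Integrable (fun ω => (X ω) ^ 2) P)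
    (hintp : Integrable (fun ω => max (X ω) 0 ^ p) P) :
    mgf (fun ω => min (X ω) y) P t ≤
      Real.exp ((1 + δ / 2) * t ^ 2 / 2 * ∫ ω, (X ω) ^ 2 ∂P +
        Real.exp (t * y) * (2 * t / δ) ^ p * ∫ ω, max (X ω) 0 ^ p ∂P) := by
  set c1 : ℝ := (1 + δ / 2) * t ^ 2 / 2 with hc1
  set c2 : ℝ := Real.exp (t * y) * (2 * t / δ) ^ p with hc2
  have hc1n : 0 ≤ c1 := by rw [hc1]; positivity
  have hc2n : 0 ≤ c2 := by
    rw [hc2]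
    have : (0:ℝ) ≤ (2 * t / δ) ^ p := Real.rpow_nonneg (by positivity) _
    positivity
  have hintmin := integrable_min_const hX hint1 y
  -- pointwise bound
  have hpt : ∀ ω, Real.exp (t * min (X ω) y) ≤
      1 + t * min (X ω) y + c1 * (X ω) ^ 2 + c2 * max (X ω) 0 ^ p := by
    intro ω
    have hk := key_pointwise hp ht hy hδ hδ1 (min_le_right (X ω) y)
    have hsq : (min (X ω) y) ^ 2 ≤ (X ω) ^ 2 := by
      rcases min_cases (X ω) y with ⟨h1, _⟩ | ⟨h1, h2⟩ <;> rw [h1]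
      nlinarith [hy]
    have hmax : max (min (X ω) y) 0 ^ p ≤ max (X ω) 0 ^ p := by
      apply Real.rpow_le_rpow (le_max_right _ _) _ (by linarith)
      exact max_le_max (min_le_left _ _) le_rfl
    have e1 : (1 + δ / 2) * (t * min (X ω) y) ^ 2 / 2 ≤ c1 * (X ω) ^ 2 := by
      rw [hc1]
      have h' : (t * min (X ω) y) ^ 2 = t ^ 2 * (min (X ω) y) ^ 2 := by ring
      rw [h']
      nlinarith [hsq, sq_nonneg t]
    have e2 : Real.exp (t * y) * (2 * t / δ) ^ p * max (min (X ω) y) 0 ^ p ≤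
        c2 * max (X ω) 0 ^ p := by
      rw [hc2]
      exact mul_le_mul_of_nonneg_left hmax (by positivity)
    calc Real.exp (t * min (X ω) y) ≤ 1 + t * min (X ω) y +
          (1 + δ / 2) * (t * min (X ω) y) ^ 2 / 2 +
          Real.exp (t * y) * (2 * t / δ) ^ p * max (min (X ω) y) 0 ^ p := hk
      _ ≤ 1 + t * min (X ω) y + c1 * (X ω) ^ 2 + c2 * max (X ω) 0 ^ p := by linarith
  -- integrate
  have i1 : Integrable (fun ω => 1 + t * min (X ω) y) P :=
    (integrable_const 1).add (hintmin.const_mul t)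
  have i2 : Integrable (fun ω => 1 + t * min (X ω) y + c1 * (X ω) ^ 2) P :=
    i1.add (hint2.const_mul c1)
  have hintH : Integrable (fun ω => 1 + t * min (X ω) y + c1 * (X ω) ^ 2 +
      c2 * max (X ω) 0 ^ p) P := i2.add (hintp.const_mul c2)
  have hmono : mgf (fun ω => min (X ω) y) P t ≤
      ∫ ω, (1 + t * min (X ω) y + c1 * (X ω) ^ 2 + c2 * max (X ω) 0 ^ p) ∂P := by
    unfold mgf
    exact integral_mono (integrable_exp_min hX ht) hintH hpt
  have hintegral : ∫ ω, (1 + t * min (X ω) y + c1 * (X ω) ^ 2 + c2 * max (X ω) 0 ^ p) ∂P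
      = 1 + t * ∫ ω, min (X ω) y ∂P + c1 * ∫ ω, (X ω) ^ 2 ∂P +
        c2 * ∫ ω, max (X ω) 0 ^ p ∂P := by
    rw [integral_add i2 (hintp.const_mul c2), integral_add i1 (hint2.const_mul c1),
      integral_add (integrable_const 1) (hintmin.const_mul t),
      integral_const, integral_const_mul, integral_const_mul, integral_const_mul]
    simp
  have hminle : ∫ ω, min (X ω) y ∂P ≤ 0 := by
    rw [← hmean]
    exact integral_mono hintmin hint1 (fun ω => min_le_left _ _)
  have hfinal : mgf (fun ω => min (X ω) y) P t ≤
      1 + (c1 * ∫ ω, (X ω) ^ 2 ∂P + c2 * ∫ ω, max (X ω) 0 ^ p ∂P) := by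
    rw [hintegral] at hmono
    nlinarith [mul_nonpos_of_nonneg_of_nonpos ht.le hminle]
  calc mgf (fun ω => min (X ω) y) P t ≤
      1 + (c1 * ∫ ω, (X ω) ^ 2 ∂P + c2 * ∫ ω, max (X ω) 0 ^ p ∂P) := hfinal
    _ ≤ Real.exp (c1 * ∫ ω, (X ω) ^ 2 ∂P + c2 * ∫ ω, max (X ω) 0 ^ p ∂P) := by
        linarith [Real.add_one_le_exp (c1 * ∫ ω, (X ω) ^ 2 ∂P +
          c2 * ∫ ω, max (X ω) 0 ^ p ∂P)]



set_option maxHeartbeats 1600000 in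
lemma maximal_chernoff {Ω : Type} [MeasurableSpace Ω] (P : Measure Ω) [IsProbabilityMeasure P]
    (n : ℕ) (Y : ℕ → Ω → ℝ) (hYm : ∀ i, Measurable (Y i))
    (hind : iIndepFun Y P)
    {y t x : ℝ} (ht : 0 < t) (hYle : ∀ i ω, Y i ω ≤ y) :
    (P {ω | ∃ k ≤ n, x ≤ ∑ i ∈ Finset.range k, Y i ω}).toReal ≤
      Real.exp (-(t * x)) * ∏ i ∈ Finset.range n, max (mgf (Y i) P t) 1 := by
  classical
  set T : ℕ → Ω → ℝ := fun k ω => ∑ i ∈ Finset.range k, Y i ω with hTdef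
  have hTm : ∀ k, Measurable (T k) := fun k => Finset.measurable_sum _ (fun i _ => hYm i)
  set m : ℕ → ℝ := fun i => mgf (Y i) P t with hmdef
  -- basic integrability
  have hsum_le : ∀ (s : Finset ℕ) (ω : Ω), (∑ i ∈ s, Y i ω) ≤ (s.card : ℝ) * y := by
    intro s ω
    calc ∑ i ∈ s, Y i ω ≤ ∑ _i ∈ s, y := Finset.sum_le_sum (fun i _ => hYle i ω)
      _ = (s.card : ℝ) * y := by rw [Finset.sum_const, nsmul_eq_mul]
  have hexp_int : ∀ (s : Finset ℕ), Integrable (fun ω => Real.exp (t * ∑ i ∈ s, Y i ω)) P := by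
    intro s
    apply Integrable.mono' (integrable_const (Real.exp (t * ((s.card : ℝ) * y))))
      (((Finset.measurable_sum s (fun i _ => hYm i)).const_mul t).exp.aestronglyMeasurable)
    filter_upwards with ω
    rw [Real.norm_eq_abs, abs_of_pos (Real.exp_pos _)]
    exact Real.exp_le_exp.2 (mul_le_mul_of_nonneg_left (hsum_le s ω) ht.le)
  have hYint : ∀ i, Integrable (fun ω => Real.exp (t * Y i ω)) P := by
    intro i
    have := hexp_int {i}
    simpa using this
  have hmpos : ∀ i, 0 < m i := fun i => mgf_pos (hYint i)
  -- first passage sets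
  set E : ℕ → Set Ω := fun k => {ω | x ≤ T k ω ∧ ∀ j < k, T j ω < x} with hEdef
  have hEm : ∀ k, MeasurableSet (E k) := by
    intro k
    have : E k = {ω | x ≤ T k ω} ∩ ⋂ (j : ℕ), ⋂ (_ : j < k), {ω | T j ω < x} := by
      ext ω
      simp [hEdef, Set.mem_iInter]
    rw [this]
    exact (measurableSet_le measurable_const (hTm k)).inter
      (MeasurableSet.iInter fun j => MeasurableSet.iInter fun _ =>
        measurableSet_lt (hTm j) measurable_const)
  have hdisj : Set.PairwiseDisjoint ↑(Finset.range (n + 1)) E := by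
    intro a _ b _ hab
    have key : ∀ c d : ℕ, c < d → Disjoint (E c) (E d) := by
      intro c d hcd
      rw [Set.disjoint_left]
      rintro ω ⟨hc1, _⟩ ⟨_, hd2⟩
      exact absurd hc1 (not_le.2 (hd2 c hcd))
    rcases lt_or_gt_of_ne hab with h | h
    · exact key a b h
    · exact (key b a h).symm
  have hcover : {ω | ∃ k ≤ n, x ≤ T k ω} ⊆ ⋃ k ∈ Finset.range (n + 1), E k := by
    rintro ω ⟨k, hk, hxk⟩
    have hex : ∃ j, j ≤ n ∧ x ≤ T j ω := ⟨k, hk, hxk⟩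
    have hspec := Nat.find_spec hex
    refine Set.mem_iUnion₂.2 ⟨Nat.find hex, ?_, ?_⟩
    · simp only [Finset.mem_coe, Finset.mem_range]
      omega
    · refine ⟨hspec.2, fun j hj => ?_⟩
      have hmin := Nat.find_min hex hj
      push_neg at hmin
      exact hmin (by omega)
  -- per-k inequality
  have key : ∀ k, k ≤ n →
      Real.exp (t * x) * (P (E k)).toReal * ∏ i ∈ Finset.Ico k n, m i ≤
        ∫ ω in E k, Real.exp (t * T n ω) ∂P := by
    intro k hk
    set S₁ := Finset.range k with hS₁
    set S₂ := Finset.Ico k n with hS₂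
    set g₁ : Ω → ℝ := fun ω => Set.indicator (E k) (fun ω => Real.exp (t * T k ω)) ω with hg₁def
    set g₂ : Ω → ℝ := fun ω => Real.exp (t * ∑ i ∈ S₂, Y i ω) with hg₂def
    have hdisjS : Disjoint S₁ S₂ := by
      rw [Finset.disjoint_left]
      intro a ha hb
      rw [hS₁, Finset.mem_range] at ha
      rw [hS₂, Finset.mem_Ico] at hb
      omega
    have base := hind.indepFun_finset S₁ S₂ hdisjS hYm
    set pS : ℕ → ({ i // i ∈ S₁ } → ℝ) → ℝ :=
      fun j v => ∑ i ∈ S₁.attach, if (i : ℕ) < j then v i else 0 with hpSdef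
    have hpSm : ∀ j, Measurable (pS j) := by
      intro j
      apply Finset.measurable_sum
      intro i _
      by_cases h : (i : ℕ) < j
      · simp only [h, if_true]
        exact measurable_pi_apply i
      · simp only [h, if_false]
        exact measurable_const
    have hpS_eval : ∀ (j : ℕ), j ≤ k → ∀ ω : Ω, pS j (fun i => Y (i : ℕ) ω) = T j ω := by
      intro j hj ω
      simp only [hpSdef]
      calc (∑ i ∈ S₁.attach, if (i : ℕ) < j then Y (i : ℕ) ω else 0)
          = ∑ i ∈ S₁, (if i < j then Y i ω else 0) :=
            Finset.sum_attach S₁ (fun i => if i < j then Y i ω else 0)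
        _ = ∑ i ∈ S₁.filter (· < j), Y i ω := (Finset.sum_filter _ _).symm
        _ = ∑ i ∈ Finset.range j, Y i ω := by
            apply Finset.sum_congr _ (fun _ _ => rfl)
            ext i
            simp only [Finset.mem_filter, hS₁, Finset.mem_range]
            omega
        _ = T j ω := rfl
    set A : Set ({ i // i ∈ S₁ } → ℝ) := {v | x ≤ pS k v ∧ ∀ j < k, pS j v < x} with hAdef
    have hAm : MeasurableSet A := by
      have : A = {v | x ≤ pS k v} ∩ ⋂ (j : ℕ), ⋂ (_ : j < k), {v | pS j v < x} := by
        ext v; simp [hAdef, Set.mem_iInter]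
      rw [this]
      exact (measurableSet_le measurable_const (hpSm k)).inter
        (MeasurableSet.iInter fun j => MeasurableSet.iInter fun _ =>
          measurableSet_lt (hpSm j) measurable_const)
    set φ : ({ i // i ∈ S₁ } → ℝ) → ℝ :=
      fun v => Set.indicator A (fun v => Real.exp (t * pS k v)) v with hφdef
    have hφm : Measurable φ := (((hpSm k).const_mul t).exp).indicator hAm
    set ψ : ({ i // i ∈ S₂ } → ℝ) → ℝ :=
      fun w => Real.exp (t * ∑ i ∈ S₂.attach, w i) with hψdef
    have hψm : Measurable ψ :=
      ((Finset.measurable_sum _ (fun i _ => measurable_pi_apply i)).const_mul t).exp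
    have hcomp := base.comp hφm hψm
    have hmem_iff : ∀ ω : Ω, ((fun i : {i // i ∈ S₁} => Y (i : ℕ) ω) ∈ A) ↔ ω ∈ E k := by
      intro ω
      constructor
      · rintro ⟨h1, h2⟩
        refine ⟨?_, fun j hj => ?_⟩
        · rwa [hpS_eval k le_rfl ω] at h1
        · have := h2 j hj
          rwa [hpS_eval j hj.le ω] at this
      · rintro ⟨h1, h2⟩
        refine ⟨?_, fun j hj => ?_⟩
        · rwa [hpS_eval k le_rfl ω]
        · rw [hpS_eval j hj.le ω]
          exact h2 j hj
    have hg₁eq : (φ ∘ fun a (i : {i // i ∈ S₁}) => Y (i : ℕ) a) = g₁ := by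
      funext ω
      simp only [Function.comp_apply, hφdef, hg₁def]
      by_cases hmem : ω ∈ E k
      · rw [Set.indicator_of_mem ((hmem_iff ω).2 hmem), Set.indicator_of_mem hmem,
          hpS_eval k le_rfl ω]
      · rw [Set.indicator_of_notMem (fun hc => hmem ((hmem_iff ω).1 hc)),
          Set.indicator_of_notMem hmem]
    have hg₂eq : (ψ ∘ fun a (i : {i // i ∈ S₂}) => Y (i : ℕ) a) = g₂ := by
      funext ω
      simp only [Function.comp_apply, hψdef, hg₂def]
      congr 1
      rw [Finset.sum_attach S₂ (fun i => Y i ω)]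
    have hindepg : IndepFun g₁ g₂ P := by
      rw [← hg₁eq, ← hg₂eq]
      exact hcomp
    have hg₁int : Integrable g₁ P := (hexp_int (Finset.range k)).indicator (hEm k)
    have hg₂int : Integrable g₂ P := hexp_int S₂
    have hmul : ∫ ω, (g₁ ω * g₂ ω) ∂P = (∫ ω, g₁ ω ∂P) * ∫ ω, g₂ ω ∂P := by
      have h := hindepg.integral_mul_eq_mul_integral hg₁int.aestronglyMeasurable hg₂int.aestronglyMeasurable
      simpa [Pi.mul_apply] using h
    have hsplit : ∀ ω : Ω, T k ω + ∑ i ∈ S₂, Y i ω = T n ω := by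
      intro ω
      simp only [hS₂]
      exact Finset.sum_range_add_sum_Ico (fun i => Y i ω) hk
    have hprod_eq : ∀ ω, g₁ ω * g₂ ω = Set.indicator (E k) (fun ω => Real.exp (t * T n ω)) ω := by
      intro ω
      simp only [hg₁def, hg₂def]
      by_cases hmem : ω ∈ E k
      · rw [Set.indicator_of_mem hmem, Set.indicator_of_mem hmem, ← Real.exp_add, ← hsplit ω]
        ring_nf
      · rw [Set.indicator_of_notMem hmem, Set.indicator_of_notMem hmem, zero_mul]
    have hg₂val : ∫ ω, g₂ ω ∂P = ∏ i ∈ S₂, m i := by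
      have h1 : g₂ = fun ω => Real.exp (t * (∑ i ∈ S₂, Y i) ω) := by
        funext ω
        simp only [hg₂def, Finset.sum_apply]
      have h2 : ∫ ω, g₂ ω ∂P = mgf (∑ i ∈ S₂, Y i) P t := by
        rw [h1]; rfl
      rw [h2, hind.mgf_sum hYm S₂]
    have hg₁low : Real.exp (t * x) * (P (E k)).toReal ≤ ∫ ω, g₁ ω ∂P := by
      have hpt : ∀ ω, Set.indicator (E k) (fun _ => Real.exp (t * x)) ω ≤ g₁ ω := by
        intro ω
        simp only [hg₁def]
        by_cases hmem : ω ∈ E k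
        · rw [Set.indicator_of_mem hmem, Set.indicator_of_mem hmem]
          exact Real.exp_le_exp.2 (mul_le_mul_of_nonneg_left hmem.1 ht.le)
        · rw [Set.indicator_of_notMem hmem, Set.indicator_of_notMem hmem]
      have h1 : ∫ ω, Set.indicator (E k) (fun _ => Real.exp (t * x)) ω ∂P
          = (P (E k)).toReal * Real.exp (t * x) := by
        rw [integral_indicator_const _ (hEm k), smul_eq_mul, measureReal_def]
      calc Real.exp (t * x) * (P (E k)).toReal
          = ∫ ω, Set.indicator (E k) (fun _ => Real.exp (t * x)) ω ∂P := by rw [h1]; ring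
        _ ≤ ∫ ω, g₁ ω ∂P := integral_mono ((integrable_const _).indicator (hEm k)) hg₁int hpt
    have hprod_nonneg : (0:ℝ) ≤ ∏ i ∈ S₂, m i := Finset.prod_nonneg fun i _ => (hmpos i).le
    calc Real.exp (t * x) * (P (E k)).toReal * ∏ i ∈ Finset.Ico k n, m i
        ≤ (∫ ω, g₁ ω ∂P) * ∏ i ∈ S₂, m i := mul_le_mul_of_nonneg_right hg₁low hprod_nonneg
      _ = (∫ ω, g₁ ω ∂P) * ∫ ω, g₂ ω ∂P := by rw [hg₂val]
      _ = ∫ ω, (g₁ ω * g₂ ω) ∂P := hmul.symm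
      _ = ∫ ω, Set.indicator (E k) (fun ω => Real.exp (t * T n ω)) ω ∂P := by
          apply integral_congr_ae
          filter_upwards with ω using hprod_eq ω
      _ = ∫ ω in E k, Real.exp (t * T n ω) ∂P := integral_indicator (hEm k)
  -- global assembly
  have hTn_int : Integrable (fun ω => Real.exp (t * T n ω)) P := hexp_int (Finset.range n)
  have hsum_int : ∑ k ∈ Finset.range (n + 1), ∫ ω in E k, Real.exp (t * T n ω) ∂P ≤
      ∫ ω, Real.exp (t * T n ω) ∂P := by
    rw [← integral_biUnion_finset (Finset.range (n + 1)) (fun k _ => hEm k)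
      (fun a ha b hb hab => hdisj ha hb hab) (fun k _ => hTn_int.integrableOn)]
    exact setIntegral_le_integral hTn_int
      (Filter.Eventually.of_forall fun ω => (Real.exp_pos _).le)
  have hTn_val : ∫ ω, Real.exp (t * T n ω) ∂P = ∏ i ∈ Finset.range n, m i := by
    have h1 : (fun ω => Real.exp (t * T n ω)) =
        fun ω => Real.exp (t * (∑ i ∈ Finset.range n, Y i) ω) := by
      funext ω
      simp only [Finset.sum_apply, hTdef]
    calc ∫ ω, Real.exp (t * T n ω) ∂P = mgf (∑ i ∈ Finset.range n, Y i) P t := by rw [h1]; rfl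
      _ = ∏ i ∈ Finset.range n, m i := hind.mgf_sum hYm _
  set g0 : ℝ := ∏ i ∈ Finset.range n, min (m i) 1 with hg0
  have hg0pos : 0 < g0 := Finset.prod_pos fun i _ => lt_min (hmpos i) one_pos
  have hglow : ∀ k, k ≤ n → g0 ≤ ∏ i ∈ Finset.Ico k n, m i := by
    intro k hk
    have h1 : (∏ i ∈ Finset.range k, min (m i) 1) * ∏ i ∈ Finset.Ico k n, min (m i) 1 = g0 :=
      Finset.prod_range_mul_prod_Ico _ hk
    have h2 : ∏ i ∈ Finset.range k, min (m i) 1 ≤ 1 :=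
      Finset.prod_le_one (fun i _ => le_min (hmpos i).le zero_le_one)
        (fun i _ => min_le_right _ _)
    have h3 : ∏ i ∈ Finset.Ico k n, min (m i) 1 ≤ ∏ i ∈ Finset.Ico k n, m i :=
      Finset.prod_le_prod (fun i _ => le_min (hmpos i).le zero_le_one)
        (fun i _ => min_le_left _ _)
    have h4 : (0:ℝ) ≤ ∏ i ∈ Finset.Ico k n, min (m i) 1 :=
      Finset.prod_nonneg fun i _ => le_min (hmpos i).le zero_le_one
    nlinarith
  have hmeas_le : (P {ω | ∃ k ≤ n, x ≤ T k ω}).toReal ≤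
      ∑ k ∈ Finset.range (n + 1), (P (E k)).toReal := by
    have h1 : P {ω | ∃ k ≤ n, x ≤ T k ω} ≤ ∑ k ∈ Finset.range (n + 1), P (E k) := by
      calc P {ω | ∃ k ≤ n, x ≤ T k ω} ≤ P (⋃ k ∈ Finset.range (n + 1), E k) :=
            measure_mono hcover
        _ = ∑ k ∈ Finset.range (n + 1), P (E k) :=
            measure_biUnion_finset hdisj (fun k _ => hEm k)
    have h2 := ENNReal.toReal_mono
      ((ENNReal.sum_lt_top.2 fun a _ => measure_lt_top P _).ne) h1
    rwa [ENNReal.toReal_sum (fun a _ => (measure_lt_top P _).ne)] at h2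
  have hmain : Real.exp (t * x) * g0 * (P {ω | ∃ k ≤ n, x ≤ T k ω}).toReal ≤
      ∏ i ∈ Finset.range n, m i := by
    calc Real.exp (t * x) * g0 * (P {ω | ∃ k ≤ n, x ≤ T k ω}).toReal
        ≤ Real.exp (t * x) * g0 * ∑ k ∈ Finset.range (n + 1), (P (E k)).toReal :=
          mul_le_mul_of_nonneg_left hmeas_le
            (mul_nonneg (Real.exp_pos _).le hg0pos.le)
      _ = ∑ k ∈ Finset.range (n + 1), Real.exp (t * x) * g0 * (P (E k)).toReal := by
          rw [Finset.mul_sum]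
      _ ≤ ∑ k ∈ Finset.range (n + 1), ∫ ω in E k, Real.exp (t * T n ω) ∂P := by
          apply Finset.sum_le_sum
          intro k hk
          have hk' : k ≤ n := by rw [Finset.mem_range] at hk; omega
          calc Real.exp (t * x) * g0 * (P (E k)).toReal
              = Real.exp (t * x) * (P (E k)).toReal * g0 := by ring
            _ ≤ Real.exp (t * x) * (P (E k)).toReal * ∏ i ∈ Finset.Ico k n, m i :=
                mul_le_mul_of_nonneg_left (hglow k hk')
                  (mul_nonneg (Real.exp_pos _).le ENNReal.toReal_nonneg)
            _ ≤ ∫ ω in E k, Real.exp (t * T n ω) ∂P := key k hk'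
      _ ≤ ∫ ω, Real.exp (t * T n ω) ∂P := hsum_int
      _ = ∏ i ∈ Finset.range n, m i := hTn_val
  have hstep : (P {ω | ∃ k ≤ n, x ≤ T k ω}).toReal ≤
      (∏ i ∈ Finset.range n, m i) / (Real.exp (t * x) * g0) := by
    rw [le_div_iff₀ (mul_pos (Real.exp_pos _) hg0pos)]
    calc (P {ω | ∃ k ≤ n, x ≤ T k ω}).toReal * (Real.exp (t * x) * g0)
        = Real.exp (t * x) * g0 * (P {ω | ∃ k ≤ n, x ≤ T k ω}).toReal := by ring
      _ ≤ ∏ i ∈ Finset.range n, m i := hmain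
  have h1 : (∏ i ∈ Finset.range n, m i) / g0 = ∏ i ∈ Finset.range n, max (m i) 1 := by
    rw [hg0, ← Finset.prod_div_distrib]
    apply Finset.prod_congr rfl
    intro i _
    rcases le_total (m i) 1 with h | h
    · rw [min_eq_left h, div_self (hmpos i).ne', max_eq_right h]
    · rw [min_eq_right h, div_one, max_eq_left h]
  have hdiv : (∏ i ∈ Finset.range n, m i) / (Real.exp (t * x) * g0) =
      Real.exp (-(t * x)) * ∏ i ∈ Finset.range n, max (m i) 1 := by
    rw [Real.exp_neg, ← h1]
    field_simp
  rw [hdiv] at hstep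
  have hfinal := hstep
  simp only [hTdef, hmdef] at hfinal
  exact hfinal


end FukAux

open FukAux


set_option maxHeartbeats 1600000 in
theorem fuk_nagaev_maximal_inequality (p : ℝ) (hp : 2 ≤ p) :
    ∃ C : ℝ, 0 < C ∧
      ∀ (Ω : Type) (_ : MeasurableSpace Ω) (P : Measure Ω),
        IsProbabilityMeasure P →
        ∀ (n : ℕ) (X : ℕ → Ω → ℝ), (∀ i, Measurable (X i)) →
          iIndepFun X P →
          (∀ i, MemLp (X i) 2 P) →
          (∀ i, MemLp (X i) (ENNReal.ofReal p) P) →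
          (∀ i, ∫ ω, X i ω ∂P = 0) →
          ∀ x δ : ℝ, 0 < x → 0 < δ → δ ≤ 1 →
            P {ω | ∃ k ≤ n, x ≤ ∑ i ∈ Finset.range k, X i ω} ≤
              ENNReal.ofReal
                (C * δ ^ (-p) * x ^ (-p) *
                    ∑ i ∈ Finset.range n, ∫ ω, (max (X i ω) 0) ^ p ∂P +
                  Real.exp (-(x ^ 2) /
                    (2 * (1 + δ) * ∑ i ∈ Finset.range n, ∫ ω, (X i ω) ^ 2 ∂P))) := by
  have hp0 : (0:ℝ) < p := by linarith
  refine ⟨4 ^ p + 4 * (8 * p) ^ p, by positivity, ?_⟩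
  intro Ω mΩ P hP n X hXm hind hL2 hLp hmean x δ hx hδ hδ1
  set A : ℝ := ∑ i ∈ Finset.range n, ∫ ω, (max (X i ω) 0) ^ p ∂P with hAdef
  set B2 : ℝ := ∑ i ∈ Finset.range n, ∫ ω, (X i ω) ^ 2 ∂P with hB2def
  -- integrability facts
  have int1 : ∀ i, Integrable (X i) P := fun i => (hL2 i).integrable (by norm_num)
  have int2 : ∀ i, Integrable (fun ω => (X i ω) ^ 2) P := fun i => (hL2 i).integrable_sq
  have intp : ∀ i, Integrable (fun ω => max (X i ω) 0 ^ p) P := by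
    intro i
    have h1 : Integrable (fun ω => ‖X i ω‖ ^ p) P := by
      have h2 := (hLp i).integrable_norm_rpow
        (by simp only [ne_eq, ENNReal.ofReal_eq_zero, not_le]; linarith)
        (by simp)
      rwa [ENNReal.toReal_ofReal (by linarith)] at h2
    apply h1.mono' (((Real.continuous_rpow_const hp0.le).measurable.comp
      ((hXm i).max measurable_const)).aestronglyMeasurable)
    filter_upwards with ω
    simp only [Function.comp_apply]
    rw [Real.norm_eq_abs, abs_of_nonneg (Real.rpow_nonneg (le_max_right _ _) _)]
    apply Real.rpow_le_rpow (le_max_right _ _) _ hp0.le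
    rw [Real.norm_eq_abs]
    rcases le_or_gt (X i ω) 0 with h | h
    · rw [max_eq_right h]; exact abs_nonneg _
    · rw [max_eq_left h.le]; exact le_abs_self _
  have hInonneg : ∀ i, 0 ≤ ∫ ω, max (X i ω) 0 ^ p ∂P :=
    fun i => integral_nonneg fun ω => Real.rpow_nonneg (le_max_right _ _) _
  have hI2nonneg : ∀ i, 0 ≤ ∫ ω, (X i ω) ^ 2 ∂P :=
    fun i => integral_nonneg fun ω => sq_nonneg _
  have hAnonneg : 0 ≤ A := Finset.sum_nonneg fun i _ => hInonneg i
  have hB2nonneg : 0 ≤ B2 := Finset.sum_nonneg fun i _ => hI2nonneg i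
  have hmain_ne : P {ω | ∃ k ≤ n, x ≤ ∑ i ∈ Finset.range k, X i ω} ≠ ⊤ := measure_ne_top _ _
  have hCpos : (0:ℝ) < 4 ^ p + 4 * (8 * p) ^ p := by positivity
  have hpoly_nonneg : 0 ≤ (4 ^ p + 4 * (8 * p) ^ p) * δ ^ (-p) * x ^ (-p) * A := by
    have h1 : (0:ℝ) ≤ δ ^ (-p) := Real.rpow_nonneg hδ.le _
    have h2 : (0:ℝ) ≤ x ^ (-p) := Real.rpow_nonneg hx.le _
    positivity
  -- trivial case B2 = 0
  rcases eq_or_lt_of_le hB2nonneg with hB2zero | hB2pos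
  · rw [← hB2zero, mul_zero, div_zero, Real.exp_zero]
    calc P {ω | ∃ k ≤ n, x ≤ ∑ i ∈ Finset.range k, X i ω} ≤ 1 := prob_le_one
      _ = ENNReal.ofReal 1 := ENNReal.ofReal_one.symm
      _ ≤ _ := ENNReal.ofReal_le_ofReal (by linarith)
  -- A > 0
  have hApos : 0 < A := by
    rcases eq_or_lt_of_le hAnonneg with hAzero | h
    · exfalso
      have hzero : ∀ i ∈ Finset.range n, ∫ ω, max (X i ω) 0 ^ p ∂P = 0 := by
        intro i hi
        have := (Finset.sum_eq_zero_iff_of_nonneg (fun i _ => hInonneg i)).1 hAzero.symm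
        exact this i hi
      have hXzero : ∀ i ∈ Finset.range n, ∫ ω, (X i ω) ^ 2 ∂P = 0 := by
        intro i hi
        have h1 : (fun ω => max (X i ω) 0 ^ p) =ᵐ[P] 0 :=
          (integral_eq_zero_iff_of_nonneg
            (fun ω => Real.rpow_nonneg (le_max_right _ _) _) (intp i)).1 (hzero i hi)
        have h2 : ∀ᵐ ω ∂P, X i ω ≤ 0 := by
          filter_upwards [h1] with ω hω
          simp only [Pi.zero_apply] at hω
          have := (Real.rpow_eq_zero (le_max_right _ _) (by linarith)).1 hω
          rcases le_or_gt (X i ω) 0 with h | h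
          · exact h
          · rw [max_eq_left h.le] at this; linarith
        have h3 : ∫ ω, (- X i ω) ∂P = 0 := by
          rw [integral_neg, hmean i, neg_zero]
        have h4 : (fun ω => - X i ω) =ᵐ[P] 0 := by
          apply (integral_eq_zero_iff_of_nonneg_ae ?_ (int1 i).neg).1 h3
          filter_upwards [h2] with ω hω
          simpa using hω
        have h5 : (fun ω => (X i ω) ^ 2) =ᵐ[P] 0 := by
          filter_upwards [h4] with ω hω
          simp only [Pi.zero_apply] at hω ⊢
          nlinarith [hω]
        rw [integral_congr_ae h5]
        simp
      have : B2 = 0 := by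
        rw [hB2def]
        exact Finset.sum_eq_zero hXzero
      rw [this] at hB2pos
      exact lt_irrefl _ hB2pos
    · exact h
  -- setup
  set y : ℝ := δ * x / 4 with hydef
  have hy : 0 < y := by rw [hydef]; positivity
  have hYind : iIndepFun (fun i (ω : Ω) => min (X i ω) y) P := by
    have := hind.comp (fun _ (z : ℝ) => min z y)
      (fun _ => measurable_id.min measurable_const)
    exact this
  set E₁ : Set Ω := ⋃ i ∈ Finset.range n, {ω | y < X i ω} with hE₁def
  set E₂ : Set Ω := {ω | ∃ k ≤ n, x ≤ ∑ i ∈ Finset.range k, min (X i ω) y} with hE₂def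
  have hincl : {ω | ∃ k ≤ n, x ≤ ∑ i ∈ Finset.range k, X i ω} ⊆ E₁ ∪ E₂ := by
    rintro ω ⟨k, hk, hxk⟩
    by_cases hc : ∃ i ∈ Finset.range n, y < X i ω
    · left
      obtain ⟨i, hi, hyi⟩ := hc
      exact Set.mem_biUnion hi hyi
    · right
      push_neg at hc
      refine ⟨k, hk, ?_⟩
      have hsum_eq : ∑ i ∈ Finset.range k, min (X i ω) y = ∑ i ∈ Finset.range k, X i ω := by
        apply Finset.sum_congr rfl
        intro i hi
        rw [Finset.mem_range] at hi
        exact min_eq_left (hc i (Finset.mem_range.2 (by omega)))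
      rw [hsum_eq]
      exact hxk
  -- Markov bound for E₁
  have hyp_pos : (0:ℝ) < y ^ p := Real.rpow_pos_of_pos hy _
  have hE₁bound : (P E₁).toReal ≤ A / y ^ p := by
    have hsub : ∀ i, {ω | y < X i ω} ⊆ {ω | y ^ p ≤ max (X i ω) 0 ^ p} := by
      intro i ω hω
      simp only [Set.mem_setOf_eq] at hω ⊢
      apply Real.rpow_le_rpow hy.le _ hp0.le
      exact le_max_iff.2 (Or.inl hω.le)
    have hone : ∀ i ∈ Finset.range n,
        (P {ω | y < X i ω}).toReal ≤ (∫ ω, max (X i ω) 0 ^ p ∂P) / y ^ p := by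
      intro i _
      have h1 := mul_meas_ge_le_integral_of_nonneg
        (Filter.Eventually.of_forall fun ω => Real.rpow_nonneg (le_max_right (X i ω) 0) p)
        (intp i) (y ^ p)
      have h2 : (P {ω | y < X i ω}).toReal ≤
          (P {ω | y ^ p ≤ max (X i ω) 0 ^ p}).toReal :=
        ENNReal.toReal_mono (measure_ne_top _ _) (measure_mono (hsub i))
      rw [le_div_iff₀ hyp_pos]
      calc (P {ω | y < X i ω}).toReal * y ^ p
          ≤ (P {ω | y ^ p ≤ max (X i ω) 0 ^ p}).toReal * y ^ p :=
            mul_le_mul_of_nonneg_right h2 hyp_pos.le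
        _ = y ^ p * (P {ω | y ^ p ≤ max (X i ω) 0 ^ p}).toReal := by ring
        _ ≤ ∫ ω, max (X i ω) 0 ^ p ∂P := h1
    have hunion : P E₁ ≤ ∑ i ∈ Finset.range n, P {ω | y < X i ω} := by
      rw [hE₁def]
      exact measure_biUnion_finset_le _ _
    have h3 := ENNReal.toReal_mono
      ((ENNReal.sum_lt_top.2 fun a _ => measure_lt_top P _).ne) hunion
    rw [ENNReal.toReal_sum (fun a _ => (measure_lt_top P _).ne)] at h3
    calc (P E₁).toReal ≤ ∑ i ∈ Finset.range n, (P {ω | y < X i ω}).toReal := h3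
      _ ≤ ∑ i ∈ Finset.range n, (∫ ω, max (X i ω) 0 ^ p ∂P) / y ^ p :=
          Finset.sum_le_sum hone
      _ = A / y ^ p := by rw [hAdef, Finset.sum_div]
  have hyp_eq : A / y ^ p = 4 ^ p * δ ^ (-p) * x ^ (-p) * A := by
    rw [hydef]
    have h1 : (δ * x / 4 : ℝ) ^ p = δ ^ p * x ^ p / 4 ^ p := by
      rw [Real.div_rpow (by positivity) (by norm_num), Real.mul_rpow hδ.le hx.le]
    rw [h1, Real.rpow_neg hδ.le, Real.rpow_neg hx.le]
    have h2 : (0:ℝ) < δ ^ p := Real.rpow_pos_of_pos hδ _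
    have h3 : (0:ℝ) < x ^ p := Real.rpow_pos_of_pos hx _
    have h4 : (0:ℝ) < (4:ℝ) ^ p := Real.rpow_pos_of_pos (by norm_num) _
    field_simp
  -- bound for E₂
  set C₁ : ℝ := 2 * (8 * p) ^ p with hC₁def
  have hC₁pos : 0 < C₁ := by rw [hC₁def]; positivity
  set D : ℝ := C₁ * (δ ^ (-p) * (x ^ (-p) * A)) with hDdef
  have hDpos : 0 < D := by
    rw [hDdef]
    have h1 : (0:ℝ) < δ ^ (-p) := Real.rpow_pos_of_pos hδ _
    have h2 : (0:ℝ) < x ^ (-p) := Real.rpow_pos_of_pos hx _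
    positivity
  set EXP : ℝ := Real.exp (-(x ^ 2) / (2 * (1 + δ) * B2)) with hEXPdef
  have hEXPpos : 0 < EXP := Real.exp_pos _
  have hE₂bound : (P E₂).toReal ≤ 2 * D + EXP := by
    rcases le_or_gt (1/2 : ℝ) D with hD1 | hD1
    · have h1 : (P E₂).toReal ≤ 1 := by
        rw [← ENNReal.toReal_one]
        exact ENNReal.toReal_mono (by simp) prob_le_one
      linarith
    · set s : ℝ := - Real.log D with hsdef
      have hsD : Real.exp (-s) = D := by
        rw [hsdef, neg_neg, Real.exp_log hDpos]
      have hspos : 0 < s := by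
        rw [hsdef, neg_pos]
        exact Real.log_neg hDpos (by linarith)
      set s' : ℝ := x ^ 2 / (2 * (1 + δ) * B2) with hs'def
      have hs'pos : 0 < s' := by rw [hs'def]; positivity
      have hEXPeq : EXP = Real.exp (-s') := by
        rw [hEXPdef, hs'def, neg_div]
      set σ : ℝ := min s s' with hσdef
      have hσpos : 0 < σ := lt_min hspos hs'pos
      set t : ℝ := 2 * σ / x with htdef
      have ht : 0 < t := by rw [htdef]; positivity
      have hcore : (P E₂).toReal ≤
          Real.exp (-(t * x)) * ∏ i ∈ Finset.range n,
            max (mgf (fun ω => min (X i ω) y) P t) 1 := by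
        have h := maximal_chernoff P n (fun i (ω : Ω) => min (X i ω) y)
          (fun i => (hXm i).min measurable_const) hYind (x := x) ht
          (fun i ω => min_le_right _ _)
        rw [hE₂def]
        exact h
      have hci : ∀ i ∈ Finset.range n,
          max (mgf (fun ω => min (X i ω) y) P t) 1 ≤
            Real.exp ((1 + δ / 2) * t ^ 2 / 2 * ∫ ω, (X i ω) ^ 2 ∂P +
              Real.exp (t * y) * (2 * t / δ) ^ p * ∫ ω, max (X i ω) 0 ^ p ∂P) := by
        intro i _
        have hrp : (0:ℝ) ≤ (2 * t / δ) ^ p := Real.rpow_nonneg (by positivity) _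
        have h2 := hI2nonneg i
        have h3 := hInonneg i
        have hc_nonneg : 0 ≤ (1 + δ / 2) * t ^ 2 / 2 * ∫ ω, (X i ω) ^ 2 ∂P +
            Real.exp (t * y) * (2 * t / δ) ^ p * ∫ ω, max (X i ω) 0 ^ p ∂P := by
          positivity
        apply max_le
        · exact mgf_min_le P (hXm i) hp ht hy hδ hδ1 (int1 i) (hmean i) (int2 i) (intp i)
        · exact Real.one_le_exp hc_nonneg
      have hprod : ∏ i ∈ Finset.range n,
          max (mgf (fun ω => min (X i ω) y) P t) 1 ≤
          Real.exp ((1 + δ / 2) * t ^ 2 / 2 * B2 +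
            Real.exp (t * y) * (2 * t / δ) ^ p * A) := by
        calc ∏ i ∈ Finset.range n, max (mgf (fun ω => min (X i ω) y) P t) 1
            ≤ ∏ i ∈ Finset.range n,
              Real.exp ((1 + δ / 2) * t ^ 2 / 2 * ∫ ω, (X i ω) ^ 2 ∂P +
                Real.exp (t * y) * (2 * t / δ) ^ p * ∫ ω, max (X i ω) 0 ^ p ∂P) :=
              Finset.prod_le_prod (fun i _ => le_trans zero_le_one (le_max_right _ _)) hci
          _ = Real.exp (∑ i ∈ Finset.range n,
              ((1 + δ / 2) * t ^ 2 / 2 * ∫ ω, (X i ω) ^ 2 ∂P +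
                Real.exp (t * y) * (2 * t / δ) ^ p * ∫ ω, max (X i ω) 0 ^ p ∂P)) :=
              (Real.exp_sum _ _).symm
          _ = Real.exp ((1 + δ / 2) * t ^ 2 / 2 * B2 +
              Real.exp (t * y) * (2 * t / δ) ^ p * A) := by
              rw [Finset.sum_add_distrib, ← Finset.mul_sum, ← Finset.mul_sum, hAdef, hB2def]
      set R : ℝ := Real.exp (t * y) * (2 * t / δ) ^ p * A with hRdef
      have hRnonneg : 0 ≤ R := by
        rw [hRdef]
        have h1 : (0:ℝ) ≤ (2 * t / δ) ^ p := Real.rpow_nonneg (by positivity) _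
        positivity
      have htx : t * x = 2 * σ := by
        rw [htdef]; field_simp
      have hty : t * y = σ * δ / 2 := by
        rw [htdef, hydef]; field_simp; ring
      have hV : (1 + δ / 2) * t ^ 2 / 2 * B2 ≤ σ := by
        have hσs' : σ ≤ s' := min_le_right _ _
        have htle : t * ((1 + δ) * B2) ≤ x := by
          have h1 : σ * (2 * (1 + δ) * B2) ≤ x ^ 2 := by
            rw [← le_div_iff₀ (by positivity), ← hs'def]
            exact hσs'
          rw [htdef, div_mul_eq_mul_div, div_le_iff₀ hx]
          nlinarith
        nlinarith [sq_nonneg t, ht.le, hB2pos.le, mul_le_mul_of_nonneg_left htle ht.le]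
      have hδp : (0:ℝ) < δ ^ p := Real.rpow_pos_of_pos hδ _
      have hxp : (0:ℝ) < x ^ p := Real.rpow_pos_of_pos hx _
      have hee : Real.exp (σ / 2) * Real.exp (σ / 2) = Real.exp σ := by
        rw [← Real.exp_add]; ring_nf
      have hRbound : R ≤ Real.exp σ * D / 2 := by
        have h1 : Real.exp (t * y) ≤ Real.exp (σ / 2) := by
          rw [hty]
          apply Real.exp_le_exp.2
          nlinarith
        have h2 : (2 * t / δ) = 4 * σ / (δ * x) := by
          rw [htdef]; field_simp; ring
        have hnum : (4 * σ : ℝ) ^ p ≤ (8 * p) ^ p * Real.exp (σ / 2) := by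
          have e1 : (4 * σ : ℝ) = 8 * (σ / 2) := by ring
          rw [e1, Real.mul_rpow (by norm_num) (by positivity)]
          calc (8:ℝ) ^ p * (σ / 2) ^ p
              ≤ 8 ^ p * (p ^ p * Real.exp (σ / 2)) :=
                mul_le_mul_of_nonneg_left (rpow_le_exp (by positivity) hp0)
                  (Real.rpow_nonneg (by norm_num) _)
            _ = (8 * p) ^ p * Real.exp (σ / 2) := by
                rw [Real.mul_rpow (by norm_num) hp0.le, mul_assoc]
        have h3 : (2 * t / δ) ^ p ≤ (8 * p) ^ p * Real.exp (σ / 2) / (δ ^ p * x ^ p) := by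
          rw [h2, Real.div_rpow (by positivity) (by positivity),
            Real.mul_rpow hδ.le hx.le]
          exact (div_le_div_iff_of_pos_right (by positivity)).2 hnum
        have h4 : R ≤ Real.exp (σ / 2) *
            ((8 * p) ^ p * Real.exp (σ / 2) / (δ ^ p * x ^ p)) * A := by
          rw [hRdef]
          apply mul_le_mul _ le_rfl hAnonneg _
          · exact mul_le_mul h1 h3 (Real.rpow_nonneg (by positivity) _) (Real.exp_pos _).le
          · positivity
        have heq : Real.exp (σ / 2) * ((8 * p) ^ p * Real.exp (σ / 2) / (δ ^ p * x ^ p)) * A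
            = Real.exp σ * D / 2 := by
          rw [hDdef, hC₁def, Real.rpow_neg hδ.le, Real.rpow_neg hx.le, ← hee]
          field_simp
        linarith [h4, heq.le, heq.ge]
      have hDσ : D ≤ Real.exp (-σ) := by
        rw [← hsD]
        exact Real.exp_le_exp.2 (neg_le_neg (min_le_left s s'))
      have hexpinv : Real.exp σ * Real.exp (-σ) = 1 := by
        rw [← Real.exp_add]; simp
      have hRhalf : R ≤ 1 / 2 := by
        have h1 : Real.exp σ * D ≤ 1 := by
          have h2 := mul_le_mul_of_nonneg_left hDσ (Real.exp_pos σ).le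
          linarith [hexpinv]
        linarith [hRbound]
      have hσDE : Real.exp (-σ) ≤ D + EXP := by
        rcases le_total s s' with h | h
        · rw [hσdef, min_eq_left h, hsD]; linarith
        · rw [hσdef, min_eq_right h, ← hEXPeq]; linarith
      calc (P E₂).toReal
          ≤ Real.exp (-(t * x)) * ∏ i ∈ Finset.range n,
              max (mgf (fun ω => min (X i ω) y) P t) 1 := hcore
        _ ≤ Real.exp (-(t * x)) * Real.exp ((1 + δ / 2) * t ^ 2 / 2 * B2 + R) :=
            mul_le_mul_of_nonneg_left hprod (Real.exp_pos _).le
        _ = Real.exp (-(t * x) + ((1 + δ / 2) * t ^ 2 / 2 * B2 + R)) := (Real.exp_add _ _).symm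
        _ ≤ Real.exp (-σ + R) := by
            apply Real.exp_le_exp.2
            rw [htx]
            linarith [hV]
        _ = Real.exp (-σ) * Real.exp R := Real.exp_add _ _
        _ ≤ Real.exp (-σ) * (1 + 2 * R) :=
            mul_le_mul_of_nonneg_left (exp_le_one_add_two_mul hRnonneg (by linarith))
              (Real.exp_pos _).le
        _ = Real.exp (-σ) + 2 * (Real.exp (-σ) * R) := by ring
        _ ≤ Real.exp (-σ) + 2 * (Real.exp (-σ) * (Real.exp σ * D / 2)) := by
            have h5 := mul_le_mul_of_nonneg_left hRbound (Real.exp_pos (-σ)).le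
            linarith
        _ = Real.exp (-σ) + D := by
            have : Real.exp (-σ) * (Real.exp σ * D / 2) = D / 2 := by
              rw [show Real.exp (-σ) * (Real.exp σ * D / 2) =
                (Real.exp σ * Real.exp (-σ)) * D / 2 by ring, hexpinv]
              ring
            rw [this]
            ring
        _ ≤ (D + EXP) + D := by linarith [hσDE]
        _ = 2 * D + EXP := by ring
  -- combine
  have hr₁ : P E₁ ≤ ENNReal.ofReal (4 ^ p * δ ^ (-p) * x ^ (-p) * A) := by
    rw [ENNReal.le_ofReal_iff_toReal_le (measure_ne_top _ _) (by rw [← hyp_eq]; positivity)]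
    rw [← hyp_eq]
    exact hE₁bound
  have hr₂ : P E₂ ≤ ENNReal.ofReal (2 * D + EXP) := by
    rw [ENNReal.le_ofReal_iff_toReal_le (measure_ne_top _ _) (by positivity)]
    exact hE₂bound
  calc P {ω | ∃ k ≤ n, x ≤ ∑ i ∈ Finset.range k, X i ω}
      ≤ P (E₁ ∪ E₂) := measure_mono hincl
    _ ≤ P E₁ + P E₂ := measure_union_le _ _
    _ ≤ ENNReal.ofReal (4 ^ p * δ ^ (-p) * x ^ (-p) * A) + ENNReal.ofReal (2 * D + EXP) :=
        add_le_add hr₁ hr₂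
    _ = ENNReal.ofReal (4 ^ p * δ ^ (-p) * x ^ (-p) * A + (2 * D + EXP)) := by
        rw [← ENNReal.ofReal_add (by rw [← hyp_eq]; positivity) (by positivity)]
    _ ≤ _ := by
        apply ENNReal.ofReal_le_ofReal
        apply le_of_eq
        rw [hDdef, hC₁def]
        ring
end
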